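/- arXiv:1404.3118 — 8 statements merged into one kernel-verified Lean document; each statement's English description precedes it below -/
import Mathlib

section
/- Let E be a real inner product space, let p > 1 be a real number, let t ≥ 0 be real, and let X, Y ∈ E with Y ≠ 0. Then ‖X‖^p + (p−1)·t^p·‖Y‖^p − p·t^(p−1)·‖Y‖^(p−2)·⟨Y, X⟩ ≥ 0. -/
/-- Pointwise non-negativity of the Lagrangian
`L(φ,g) = |∇φ|^p + (p−1)(φ/g)^p|∇g|^p − p(φ/g)^(p−1)|∇g|^(p−2)⟨∇g,∇φ⟩`
(Proposition 3.1 of the paper), with `X = ∇φ`, `Y = ∇g`, `t = φ/g`. -/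
theorem lagrangian_nonneg {E : Type*} [NormedAddCommGroup E] [InnerProductSpace ℝ E]
    {p : ℝ} (hp : 1 < p) {t : ℝ} (ht : 0 ≤ t) (X Y : E) (hY : Y ≠ 0) :
    0 ≤ ‖X‖ ^ p + (p - 1) * t ^ p * ‖Y‖ ^ p
        - p * t ^ (p - 1) * ‖Y‖ ^ (p - 2) * (inner ℝ Y X : ℝ) := by
  have hYpos : (0 : ℝ) < ‖Y‖ := norm_pos_iff.mpr hY
  have hp0 : (0 : ℝ) < p := lt_trans one_pos hp
  have hconj : p.HolderConjugate (p / (p - 1)) :=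
    (Real.holderConjugate_iff_eq_conjExponent hp).2 rfl
  have hb0 : 0 ≤ t ^ (p - 1) * ‖Y‖ ^ (p - 1) :=
    mul_nonneg (Real.rpow_nonneg ht _) (Real.rpow_nonneg hYpos.le _)
  -- Young's inequality with a = ‖X‖, b = t^(p-1) * ‖Y‖^(p-1)
  have hyoung := Real.young_inequality_of_nonneg (norm_nonneg X) hb0 hconj
  have hq : (t ^ (p - 1) * ‖Y‖ ^ (p - 1)) ^ (p / (p - 1)) = t ^ p * ‖Y‖ ^ p := by
    rw [Real.mul_rpow (Real.rpow_nonneg ht _) (Real.rpow_nonneg hYpos.le _),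
      ← Real.rpow_mul ht, ← Real.rpow_mul hYpos.le,
      mul_div_cancel₀ _ (sub_ne_zero.mpr (ne_of_gt hp))]
  rw [hq] at hyoung
  -- multiply Young by p
  have key : p * (‖X‖ * (t ^ (p - 1) * ‖Y‖ ^ (p - 1))) ≤ ‖X‖ ^ p + (p - 1) * (t ^ p * ‖Y‖ ^ p) := by
    have := mul_le_mul_of_nonneg_left hyoung hp0.le
    calc p * (‖X‖ * (t ^ (p - 1) * ‖Y‖ ^ (p - 1)))
        ≤ p * (‖X‖ ^ p / p + t ^ p * ‖Y‖ ^ p / (p / (p - 1))) := this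
      _ = ‖X‖ ^ p + (p - 1) * (t ^ p * ‖Y‖ ^ p) := by
          field_simp
  -- bound the inner product
  have hinner : (inner ℝ Y X : ℝ) ≤ ‖Y‖ * ‖X‖ := real_inner_le_norm Y X
  have hcoef : 0 ≤ p * t ^ (p - 1) * ‖Y‖ ^ (p - 2) :=
    mul_nonneg (mul_nonneg hp0.le (Real.rpow_nonneg ht _)) (Real.rpow_nonneg hYpos.le _)
  have h1 : p * t ^ (p - 1) * ‖Y‖ ^ (p - 2) * (inner ℝ Y X : ℝ)
      ≤ p * t ^ (p - 1) * ‖Y‖ ^ (p - 2) * (‖Y‖ * ‖X‖) :=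
    mul_le_mul_of_nonneg_left hinner hcoef
  have hYp : ‖Y‖ ^ (p - 2) * ‖Y‖ = ‖Y‖ ^ (p - 1) := by
    rw [show p - 1 = p - 2 + 1 by ring, Real.rpow_add hYpos, Real.rpow_one]
  have h2 : p * t ^ (p - 1) * ‖Y‖ ^ (p - 2) * (‖Y‖ * ‖X‖)
      = p * (‖X‖ * (t ^ (p - 1) * ‖Y‖ ^ (p - 1))) := by
    rw [← hYp]; ring
  linarith [key, h1, h2]
end

section
/- Let E be a real inner product space, let p > 1 be a real number, let t ≥ 0 be real, and let X, Y ∈ E with Y ≠ 0. Then ‖X‖^p + (p−1)·t^p·‖Y‖^p − p·t^(p−1)·‖Y‖^(p−2)·⟨Y, X⟩ = 0 if and only if X = t • Y. -/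
/-- Scalar Young-type inequality: for `a ≥ 0`, `b > 0`, `1 < p`,
`p * b^(p-1) * a ≤ a^p + (p-1) * b^p`, strictly unless `a = b`. -/
lemma young_strict_aux {p a b : ℝ} (hp : 1 < p) (ha : 0 ≤ a) (hb : 0 < b) (hab : a ≠ b) :
    p * b ^ (p - 1) * a < a ^ p + (p - 1) * b ^ p := by
  have hu : 0 ≤ a / b := div_nonneg ha hb.le
  have hs : (-1 : ℝ) ≤ a / b - 1 := by linarith
  have hs' : a / b - 1 ≠ 0 := by
    intro h
    apply hab
    have : a / b = 1 := by linarith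
    field_simp at this
    linarith
  have hbern := one_add_mul_self_lt_rpow_one_add hs hs' hp
  rw [show 1 + (a / b - 1) = a / b by ring] at hbern
  -- multiply by b ^ p
  have hbp : (0 : ℝ) < b ^ p := Real.rpow_pos_of_pos hb _
  have hkey : (1 + p * (a / b - 1)) * b ^ p < (a / b) ^ p * b ^ p :=
    mul_lt_mul_of_pos_right hbern hbp
  have hdiv : (a / b) ^ p * b ^ p = a ^ p := by
    rw [← Real.mul_rpow hu hb.le, div_mul_cancel₀ _ hb.ne']
  have hbp1 : b ^ (p - 1) * b = b ^ p := by
    rw [← Real.rpow_add_one hb.ne', sub_add_cancel]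
  have hbpa : b ^ p * (a / b) = b ^ (p - 1) * a := by
    rw [← hbp1]; field_simp
  calc p * b ^ (p - 1) * a = (1 + p * (a / b - 1)) * b ^ p + (p - 1) * b ^ p := by
        rw [show (1 + p * (a / b - 1)) * b ^ p = p * (b ^ p * (a / b)) - (p - 1) * b ^ p by ring,
          hbpa]; ring
    _ < a ^ p + (p - 1) * b ^ p := by rw [← hdiv]; linarith

/-- Equality case of the pointwise non-negativity of the Lagrangian
`L(φ,g) = |∇φ|^p + (p−1)(φ/g)^p|∇g|^p − p(φ/g)^(p−1)|∇g|^(p−2)⟨∇g,∇φ⟩`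
(Proposition 3.1 of the paper), with `X = ∇φ`, `Y = ∇g`, `t = φ/g`:
the Lagrangian vanishes exactly when `X = t • Y`. -/
theorem lagrangian_eq_zero_iff {E : Type*} [NormedAddCommGroup E] [InnerProductSpace ℝ E]
    {p : ℝ} (hp : 1 < p) {t : ℝ} (ht : 0 ≤ t) (X Y : E) (hY : Y ≠ 0) :
    ‖X‖ ^ p + (p - 1) * t ^ p * ‖Y‖ ^ p
        - p * t ^ (p - 1) * ‖Y‖ ^ (p - 2) * (inner ℝ Y X : ℝ) = 0 ↔ X = t • Y := by
  have hp0 : (0 : ℝ) < p := by linarith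
  have hn : (0 : ℝ) < ‖Y‖ := norm_pos_iff.mpr hY
  rcases eq_or_lt_of_le ht with rfl | htpos
  · -- t = 0
    rw [Real.zero_rpow hp0.ne', Real.zero_rpow (by linarith : p - 1 ≠ 0)]
    simp only [mul_zero, zero_mul, zero_smul, mul_comm]
    constructor
    · intro h
      have : ‖X‖ ^ p = 0 := by linarith
      have hX : ‖X‖ = 0 := by
        by_contra hX
        exact (Real.rpow_pos_of_pos (lt_of_le_of_ne (norm_nonneg X) (Ne.symm hX)) p).ne' this
      exact norm_eq_zero.mp hX
    · intro h
      rw [h]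
      simp [Real.zero_rpow hp0.ne']
  · -- t > 0
    have hb : (0 : ℝ) < t * ‖Y‖ := mul_pos htpos hn
    have hn2 : ‖Y‖ ^ (p - 2) * ‖Y‖ ^ (2 : ℝ) = ‖Y‖ ^ p := by
      rw [← Real.rpow_add hn]; ring_nf
    have hn1 : ‖Y‖ ^ (p - 2) * ‖Y‖ = ‖Y‖ ^ (p - 1) := by
      nth_rewrite 2 [← Real.rpow_one ‖Y‖]
      rw [← Real.rpow_add hn]; ring_nf
    have ht1 : t ^ (p - 1) * t = t ^ p := by
      rw [← Real.rpow_add_one htpos.ne', sub_add_cancel]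
    have hbp : (t * ‖Y‖) ^ p = t ^ p * ‖Y‖ ^ p := Real.mul_rpow ht hn.le
    have hbp1 : (t * ‖Y‖) ^ (p - 1) = t ^ (p - 1) * ‖Y‖ ^ (p - 1) :=
      Real.mul_rpow ht hn.le
    constructor
    · intro h
      -- Cauchy–Schwarz
      have hcs : (inner ℝ Y X : ℝ) ≤ ‖Y‖ * ‖X‖ := real_inner_le_norm Y X
      have hcoef : (0 : ℝ) < p * t ^ (p - 1) * ‖Y‖ ^ (p - 2) :=
        mul_pos (mul_pos hp0 (Real.rpow_pos_of_pos htpos _)) (Real.rpow_pos_of_pos hn _)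
      -- the norm equality must hold
      have hXb : ‖X‖ = t * ‖Y‖ := by
        by_contra hab
        have hstrict := young_strict_aux hp (norm_nonneg X) hb hab
        rw [hbp, hbp1] at hstrict
        have h1 : p * t ^ (p - 1) * ‖Y‖ ^ (p - 2) * (inner ℝ Y X : ℝ)
            ≤ p * t ^ (p - 1) * ‖Y‖ ^ (p - 2) * (‖Y‖ * ‖X‖) :=
          mul_le_mul_of_nonneg_left hcs hcoef.le
        have h2 : p * t ^ (p - 1) * ‖Y‖ ^ (p - 2) * (‖Y‖ * ‖X‖)
            = p * (t ^ (p - 1) * ‖Y‖ ^ (p - 1)) * ‖X‖ := by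
          rw [← hn1]; ring
        nlinarith [hstrict, h1, h2]
      -- the Cauchy–Schwarz equality must hold
      have hinner : (inner ℝ Y X : ℝ) = ‖Y‖ * ‖X‖ := by
        by_contra hne
        have hlt : (inner ℝ Y X : ℝ) < ‖Y‖ * ‖X‖ := lt_of_le_of_ne hcs hne
        have h1 : p * t ^ (p - 1) * ‖Y‖ ^ (p - 2) * (inner ℝ Y X : ℝ)
            < p * t ^ (p - 1) * ‖Y‖ ^ (p - 2) * (‖Y‖ * ‖X‖) :=
          mul_lt_mul_of_pos_left hlt hcoef
        have heq : ‖X‖ ^ p = (t * ‖Y‖) ^ p := by rw [hXb]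
        have h2 : p * t ^ (p - 1) * ‖Y‖ ^ (p - 2) * (‖Y‖ * ‖X‖)
            = p * (t ^ (p - 1) * ‖Y‖ ^ (p - 1)) * (t * ‖Y‖) := by
          rw [← hn1, hXb]; ring
        have hn1' : ‖Y‖ ^ (p - 1) * ‖Y‖ = ‖Y‖ ^ p := by
          rw [← Real.rpow_add_one hn.ne', sub_add_cancel]
        have h3 : p * (t ^ (p - 1) * ‖Y‖ ^ (p - 1)) * (t * ‖Y‖)
            = p * (t ^ p * ‖Y‖ ^ p) := by
          rw [show p * (t ^ (p - 1) * ‖Y‖ ^ (p - 1)) * (t * ‖Y‖)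
              = p * ((t ^ (p - 1) * t) * (‖Y‖ ^ (p - 1) * ‖Y‖)) by ring, ht1, hn1']
        rw [heq, hbp] at h
        nlinarith [h1, h2, h3]
      -- conclude
      have := inner_eq_norm_mul_iff_real.mp hinner
      rw [hXb] at this
      have : ‖Y‖ • X = ‖Y‖ • (t • Y) := by
        rw [smul_smul]; rw [← this]; rw [mul_comm t ‖Y‖, mul_smul]
      exact smul_right_injective E hn.ne' this
    · intro h
      subst h
      rw [norm_smul, Real.norm_eq_abs, abs_of_nonneg ht, real_inner_smul_right,
        real_inner_self_eq_norm_sq]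
      rw [Real.mul_rpow ht hn.le]
      have hsq : ‖Y‖ ^ (2 : ℕ) = ‖Y‖ ^ (2 : ℝ) := by
        rw [← Real.rpow_natCast]; norm_num
      rw [hsq]
      rw [show p * t ^ (p - 1) * ‖Y‖ ^ (p - 2) * (t * ‖Y‖ ^ (2 : ℝ))
          = p * (t ^ (p - 1) * t) * (‖Y‖ ^ (p - 2) * ‖Y‖ ^ (2 : ℝ)) by ring, ht1, hn2]
      ring
end

section
/- Let m ≥ 1 be an integer, let V : ℝ^m → ℝ be continuous, and suppose there exists a twice continuously differentiable function w : ℝ^m → ℝ with w(x) > 0 for all x and Δw(x) + V(x)·w(x) ≤ 0 for all x ∈ ℝ^m, where Δ denotes the Euclidean Laplacian (the trace of the Hessian). Then for every compactly supported continuously differentiable function φ : ℝ^m → ℝ one has ∫_{ℝ^m} V(x)·φ(x)² dx ≤ ∫_{ℝ^m} ‖∇φ(x)‖² dx, with integrals taken with respect to Lebesgue measure. -/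
open MeasureTheory

/-- The Euclidean Laplacian: trace of the Hessian, i.e. the sum of the second partial
derivatives in the directions of the standard basis. -/
noncomputable def laplacian {m : ℕ} (u : EuclideanSpace ℝ (Fin m) → ℝ)
    (x : EuclideanSpace ℝ (Fin m)) : ℝ :=
  ∑ i, fderiv ℝ (fun y => fderiv ℝ u y (EuclideanSpace.single i (1 : ℝ))) x
    (EuclideanSpace.single i (1 : ℝ))

/-- Implication i) ⇒ iii) of Proposition 3.4 of the paper (Allegretto–Piepenbrink) with
`p = 2`, `f ≡ 0`, `M = ℝ^m`: a positive classical supersolution of `Δw + V w ≤ 0` forces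
the quadratic form `Q_V(φ) = ∫‖∇φ‖² − ∫Vφ²` to be non-negative. -/
theorem allegretto_piepenbrink (m : ℕ) (hm : 1 ≤ m)
    (V : EuclideanSpace ℝ (Fin m) → ℝ) (hV : Continuous V)
    (w : EuclideanSpace ℝ (Fin m) → ℝ) (hw : ContDiff ℝ 2 w)
    (hwpos : ∀ x, 0 < w x)
    (hsuper : ∀ x, laplacian w x + V x * w x ≤ 0)
    (φ : EuclideanSpace ℝ (Fin m) → ℝ) (hφ : ContDiff ℝ 1 φ)
    (hφc : HasCompactSupport φ) :
    ∫ x, V x * (φ x) ^ 2 ≤ ∫ x, ‖gradient φ x‖ ^ 2 := by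
  classical
  set e : Fin m → EuclideanSpace ℝ (Fin m) := fun i => EuclideanSpace.single i (1 : ℝ) with he
  set Dφ := fderiv ℝ φ with hDφ
  set Dw := fderiv ℝ w with hDw
  have hwne : ∀ x, w x ≠ 0 := fun x => (hwpos x).ne'
  -- basic smoothness facts
  have hφd : Differentiable ℝ φ := hφ.differentiable one_ne_zero
  have hwd : Differentiable ℝ w := hw.differentiable (by norm_num)
  have hDφc : Continuous Dφ := hφ.continuous_fderiv one_ne_zero
  have hDwc : Continuous Dw := hw.continuous_fderiv (by norm_num)
  -- the second derivative functions
  set wi : Fin m → EuclideanSpace ℝ (Fin m) → ℝ := fun i y => fderiv ℝ w y (EuclideanSpace.single i (1:ℝ)) with hwi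
  have hwicd : ∀ i, ContDiff ℝ 1 (wi i) := fun i =>
    (hw.fderiv_right (by norm_num)).clm_apply contDiff_const
  have hwid : ∀ i, Differentiable ℝ (wi i) := fun i => (hwicd i).differentiable one_ne_zero
  have hHessc : ∀ i, Continuous fun x => fderiv ℝ (wi i) x (e i) := fun i =>
    ((hwicd i).continuous_fderiv one_ne_zero).clm_apply continuous_const
  have hlap : ∀ x, laplacian w x = ∑ i, fderiv ℝ (wi i) x (e i) := fun x => rfl
  have hlapc : Continuous (laplacian w) := by
    have : Continuous fun x => ∑ i, fderiv ℝ (wi i) x (e i) :=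
      continuous_finset_sum _ fun i _ => hHessc i
    simpa [funext hlap] using this
  -- the test quotient
  set g : EuclideanSpace ℝ (Fin m) → ℝ := fun x => φ x ^ 2 * (w x)⁻¹ with hg
  have hgc : Continuous g := (hφ.continuous.pow 2).mul (hw.continuous.inv₀ hwne)
  have hgnn : ∀ x, 0 ≤ g x := fun x => by
    have := hwpos x; positivity
  have hgd : ∀ x, HasFDerivAt g
      ((φ x ^ 2) • ((-((w x) ^ 2)⁻¹) • Dw x) + ((w x)⁻¹) • (φ x • Dφ x + φ x • Dφ x)) x := by
    intro x
    have h1 : HasFDerivAt (fun y => φ y * φ y) (φ x • Dφ x + φ x • Dφ x) x :=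
      (hφd x).hasFDerivAt.mul (hφd x).hasFDerivAt
    have h2 : HasFDerivAt (fun y => (w y)⁻¹) ((-((w x) ^ 2)⁻¹) • Dw x) x :=
      (hasDerivAt_inv (hwne x)).comp_hasFDerivAt x (hwd x).hasFDerivAt
    have h3 : HasFDerivAt (fun y => (φ y * φ y) * (w y)⁻¹)
        ((φ x * φ x) • ((-((w x) ^ 2)⁻¹) • Dw x) + ((w x)⁻¹) • (φ x • Dφ x + φ x • Dφ x)) x :=
      h1.mul h2
    have : g = fun y => (φ y * φ y) * (w y)⁻¹ := by funext y; rw [hg]; ring_nf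
    rw [this]
    convert h3 using 2 <;> ring_nf
  have hgdiff : Differentiable ℝ g := fun x => (hgd x).differentiableAt
  -- explicit formula for directional derivatives of g
  set G : Fin m → EuclideanSpace ℝ (Fin m) → ℝ := fun i x =>
    (2 * φ x * Dφ x (e i) * w x - φ x ^ 2 * Dw x (e i)) / (w x) ^ 2 with hGdef
  have hG : ∀ i x, fderiv ℝ g x (e i) = G i x := by
    intro i x
    rw [(hgd x).fderiv]
    have hx := hwne x
    simp only [ContinuousLinearMap.add_apply, ContinuousLinearMap.coe_smul', Pi.smul_apply,
      smul_eq_mul, hGdef]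
    field_simp
    ring
  have hGc : ∀ i, Continuous (G i) := fun i => by
    apply Continuous.div
    · fun_prop (disch := skip)
      
    · exact (hw.continuous.pow 2)
    · intro x; exact pow_ne_zero _ (hwne x)
  -- vanishing off the support of φ
  have hφ0 : ∀ x ∉ tsupport φ, φ x = 0 := fun x hx => image_eq_zero_of_notMem_tsupport hx
  have hDφ0 : ∀ x ∉ tsupport φ, Dφ x = 0 := by
    intro x hx
    by_contra h
    exact hx (support_fderiv_subset ℝ (f := φ) h)
  -- integrability helper
  have hint : ∀ h : EuclideanSpace ℝ (Fin m) → ℝ, Continuous h →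
      (∀ x ∉ tsupport φ, h x = 0) → Integrable h volume := by
    intro h hc h0
    exact hc.integrable_of_hasCompactSupport (hφc.mono' (Function.support_subset_iff'.2 h0))
  have hg0 : ∀ x ∉ tsupport φ, g x = 0 := fun x hx => by simp [hg, hφ0 x hx]
  -- integration by parts in each coordinate direction
  have intDgwi : ∀ i, Integrable (fun x => fderiv ℝ g x (e i) * wi i x) volume := by
    intro i
    have : (fun x => fderiv ℝ g x (e i) * wi i x) = fun x => G i x * wi i x := by
      funext x; rw [hG]
    rw [this]
    refine hint _ ((hGc i).mul (hDwc.clm_apply continuous_const)) fun x hx => ?_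
    simp [hGdef, hφ0 x hx, hDφ0 x hx]
  have intghess : ∀ i, Integrable (fun x => g x * fderiv ℝ (wi i) x (e i)) volume := fun i =>
    hint _ (hgc.mul (hHessc i)) fun x hx => by simp [hg0 x hx]
  have hIBP : ∀ i, ∫ x, g x * fderiv ℝ (wi i) x (e i) = - ∫ x, fderiv ℝ g x (e i) * wi i x := by
    intro i
    exact integral_mul_fderiv_eq_neg_fderiv_mul_of_integrable (intDgwi i) (intghess i)
      (hint _ (hgc.mul (hDwc.clm_apply continuous_const)) fun x hx => by simp [hg0 x hx])
      (fun x _ => hgdiff x) (fun x _ => hwid i x)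
  -- the gradient norm as a sum of squares
  have hgrad : ∀ x, ‖gradient φ x‖ ^ 2 = ∑ i, (Dφ x (e i)) ^ 2 := by
    intro x
    have hv : ∀ i, gradient φ x i = Dφ x (e i) := by
      intro i
      have h1 : Dφ x = InnerProductSpace.toDual ℝ _ (gradient φ x) :=
        (hφd x).hasFDerivAt.unique (hφd x).hasGradientAt.hasFDerivAt
      rw [h1]
      simp only [InnerProductSpace.toDual_apply_apply, he, EuclideanSpace.inner_single_right,
        real_inner_comm]
      simp
    rw [EuclideanSpace.norm_eq, Real.sq_sqrt (by positivity)]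
    exact Finset.sum_congr rfl fun i _ => by rw [Real.norm_eq_abs, sq_abs, hv i]
  -- integrability of the two sides
  have intV : Integrable (fun x => V x * φ x ^ 2) volume :=
    hint _ (hV.mul (hφ.continuous.pow 2)) fun x hx => by simp [hφ0 x hx]
  have intglap : Integrable (fun x => g x * laplacian w x) volume :=
    hint _ (hgc.mul hlapc) fun x hx => by simp [hg0 x hx]
  have intsum : Integrable (fun x => ∑ i, fderiv ℝ g x (e i) * wi i x) volume :=
    integrable_finset_sum _ fun i _ => intDgwi i
  have intnorm : Integrable (fun x => ‖gradient φ x‖ ^ 2) volume := by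
    have : (fun x => ‖gradient φ x‖ ^ 2) = fun x => ∑ i, (Dφ x (e i)) ^ 2 := funext hgrad
    rw [this]
    exact integrable_finset_sum _ fun i _ => hint _
      (((hDφc.clm_apply continuous_const)).pow 2) fun x hx => by simp [hDφ0 x hx]
  -- pointwise inequality 1 : V φ² ≤ -(g Δw)
  have pt1 : ∀ x, V x * φ x ^ 2 ≤ -(g x * laplacian w x) := by
    intro x
    have h1 := hsuper x
    have h2 := hgnn x
    have h3 : g x * w x = φ x ^ 2 := by
      rw [hg, mul_assoc, inv_mul_cancel₀ (hwne x), mul_one]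
    have h4 : g x * laplacian w x ≤ g x * (-(V x * w x)) :=
      mul_le_mul_of_nonneg_left (by linarith) h2
    have h5 : g x * (-(V x * w x)) = -(V x * φ x ^ 2) := by rw [← h3]; ring
    linarith
  -- pointwise inequality 2 : ∑ ∂ᵢg ∂ᵢw ≤ ‖∇φ‖²
  have pt2 : ∀ x, ∑ i, fderiv ℝ g x (e i) * wi i x ≤ ‖gradient φ x‖ ^ 2 := by
    intro x
    rw [hgrad x]
    refine Finset.sum_le_sum fun i _ => ?_
    rw [hG]
    have hwx := hwpos x
    set a := Dφ x (e i)
    set b := Dw x (e i)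
    have hb : wi i x = b := rfl
    rw [hb, hGdef]
    rw [div_mul_eq_mul_div, div_le_iff₀ (by positivity)]
    nlinarith [sq_nonneg (a * w x - φ x * b)]
  -- assembling everything
  calc ∫ x, V x * φ x ^ 2
      ≤ ∫ x, -(g x * laplacian w x) := integral_mono intV intglap.neg pt1
    _ = - ∫ x, g x * laplacian w x := integral_neg _
    _ = - ∑ i, ∫ x, g x * fderiv ℝ (wi i) x (e i) := by
        rw [show (fun x => g x * laplacian w x)
            = fun x => ∑ i, g x * fderiv ℝ (wi i) x (e i) by
          funext x; rw [hlap, Finset.mul_sum]]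
        rw [integral_finset_sum _ fun i _ => intghess i]
    _ = ∑ i, ∫ x, fderiv ℝ g x (e i) * wi i x := by
        rw [← Finset.sum_neg_distrib]
        exact Finset.sum_congr rfl fun i _ => by rw [hIBP i, neg_neg]
    _ = ∫ x, ∑ i, fderiv ℝ g x (e i) * wi i x :=
        (integral_finset_sum _ fun i _ => intDgwi i).symm
    _ ≤ ∫ x, ‖gradient φ x‖ ^ 2 := integral_mono intsum intnorm pt2
end

section
/- Let m ≥ 1 be an integer, let Ω ⊆ ℝ^m be open, and let u : Ω → ℝ be twice continuously differentiable with u(x) > 0 and Δu(x) ≤ 0 for all x ∈ Ω, where Δ denotes the Euclidean Laplacian. Then for every continuously differentiable function φ : ℝ^m → ℝ with compact support contained in Ω one has (1/4)·∫_Ω (‖∇u(x)‖²/u(x)²)·φ(x)² dx ≤ ∫_Ω ‖∇φ(x)‖² dx, with integrals taken with respect to Lebesgue measure. -/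
open MeasureTheory
open Set Filter Topology
open scoped Manifold

/-- Item 5) of Proposition 3.5 of the paper (Hardy inequality (3.27)) with `p = 2`,
`f ≡ 0`, for a classical positive superharmonic function `u` on an open `Ω ⊆ ℝ^m`:
`(1/4) ∫_Ω (‖∇u‖²/u²) φ² ≤ ∫_Ω ‖∇φ‖²` for every `C¹` function `φ` with compact
support contained in `Ω`. -/
theorem hardy_superharmonic (m : ℕ) (hm : 1 ≤ m)
    (Ω : Set (EuclideanSpace ℝ (Fin m))) (hΩ : IsOpen Ω)
    (u : EuclideanSpace ℝ (Fin m) → ℝ)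
    (hu : ContDiffOn ℝ 2 u Ω) (hupos : ∀ x ∈ Ω, 0 < u x)
    (hsuper : ∀ x ∈ Ω, laplacian u x ≤ 0)
    (φ : EuclideanSpace ℝ (Fin m) → ℝ) (hφ : ContDiff ℝ 1 φ)
    (hφc : HasCompactSupport φ) (hφsupp : tsupport φ ⊆ Ω) :
    (1 / 4) * ∫ x in Ω, (‖gradient u x‖ ^ 2 / (u x) ^ 2) * (φ x) ^ 2 ≤
      ∫ x in Ω, ‖gradient φ x‖ ^ 2 := by
  classical
  set e : Fin m → EuclideanSpace ℝ (Fin m) := fun i => EuclideanSpace.single i (1 : ℝ) with he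
  -- gradient norm formula
  have hgradnorm : ∀ (f : EuclideanSpace ℝ (Fin m) → ℝ) (x : EuclideanSpace ℝ (Fin m)),
      ‖gradient f x‖ ^ 2 = ∑ i, (fderiv ℝ f x (e i)) ^ 2 := by
    intro f x
    have h : ∀ i, gradient f x i = fderiv ℝ f x (e i) := by
      intro i
      have h2 := @InnerProductSpace.toDual_symm_apply ℝ _ _ _ _ _
        (EuclideanSpace.single i (1 : ℝ)) (fderiv ℝ f x)
      rw [gradient, he, ← h2, EuclideanSpace.inner_single_right]
      simp
    rw [EuclideanSpace.norm_eq, Real.sq_sqrt (by positivity)]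
    simp_rw [Real.norm_eq_abs, sq_abs, h]
  -- cutoff
  obtain ⟨L, hLc, hKL, hLΩ⟩ := exists_compact_between hφc hΩ hφsupp
  have hdisj : Disjoint (interior L)ᶜ (tsupport φ) :=
    disjoint_compl_left_iff_subset.mpr hKL
  obtain ⟨χ₀, hχ0, hχ1, hχ01⟩ := exists_contMDiffMap_zero_one_nhds_of_isClosed (n := (⊤ : ℕ∞))
    (𝓘(ℝ, EuclideanSpace ℝ (Fin m))) isOpen_interior.isClosed_compl
    (isClosed_tsupport φ) hdisj
  set χ : EuclideanSpace ℝ (Fin m) → ℝ := ⇑χ₀ with hχdef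
  have hχsm : ContDiff ℝ 2 χ := by
    have h := contMDiff_iff_contDiff.mp χ₀.contMDiff
    exact h.of_le (by exact WithTop.coe_le_coe.mpr le_top)
  obtain ⟨V, hVo, hKV, hV1⟩ := eventually_nhdsSet_iff_exists.mp hχ1
  have hχint : ∀ x ∈ (interior L)ᶜ, χ x = 0 := hχ0.self_of_nhdsSet
  have hχsupp : tsupport χ ⊆ L := by
    apply closure_minimal ?_ hLc.isClosed
    intro x hx
    by_contra hxl
    exact hx (hχint x (fun h => hxl (interior_subset h)))
  have hχc : HasCompactSupport χ := hLc.of_isClosed_subset (isClosed_tsupport χ) hχsupp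
  -- main functions
  set U : EuclideanSpace ℝ (Fin m) → ℝ := fun x => χ x * u x with hUdef
  set r : EuclideanSpace ℝ (Fin m) → ℝ := fun x => φ x / u x with hrdef
  set w : EuclideanSpace ℝ (Fin m) → ℝ := fun x => φ x * r x with hwdef
  have huΩ : ∀ x ∈ Ω, u x ≠ 0 := fun x hx => (hupos x hx).ne'
  have hφ0 : ∀ x, x ∉ tsupport φ → φ x = 0 := fun x hx => image_eq_zero_of_notMem_tsupport hx
  have hr0 : ∀ x, x ∉ tsupport φ → r x = 0 := by
    intro x hx; simp only [hrdef, hφ0 x hx, zero_div]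
  have hrΩ0 : ∀ x, x ∉ Ω → r x = 0 := fun x hx => hr0 x (fun h => hx (hφsupp h))
  -- U is C²
  have hUC2 : ContDiff ℝ 2 U := by
    rw [contDiff_iff_contDiffAt]
    intro x
    by_cases hx : x ∈ Ω
    · exact hχsm.contDiffAt.mul (hu.contDiffAt (hΩ.mem_nhds hx))
    · have hx' : x ∉ tsupport χ := fun h => hx (hLΩ (hχsupp h))
      have : U =ᶠ[𝓝 x] (fun _ => 0) := by
        filter_upwards [(isClosed_tsupport χ).isOpen_compl.mem_nhds hx'] with y hy
        simp [hUdef, image_eq_zero_of_notMem_tsupport hy]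
      exact (contDiffAt_const (c := 0)).congr_of_eventuallyEq this
  -- r is C¹
  have hrC1 : ContDiff ℝ 1 r := by
    rw [contDiff_iff_contDiffAt]
    intro x
    by_cases hx : x ∈ Ω
    · exact hφ.contDiffAt.div ((hu.of_le (by norm_num)).contDiffAt (hΩ.mem_nhds hx)) (huΩ x hx)
    · have hx' : x ∉ tsupport φ := fun h => hx (hφsupp h)
      have : r =ᶠ[𝓝 x] (fun _ => 0) := by
        filter_upwards [(isClosed_tsupport φ).isOpen_compl.mem_nhds hx'] with y hy
        simp [hrdef, hφ0 y hy]
      exact (contDiffAt_const (c := 0)).congr_of_eventuallyEq this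
  have hwC1 : ContDiff ℝ 1 w := hφ.mul hrC1
  -- supports
  have hrsupp : tsupport r ⊆ tsupport φ := by
    apply closure_mono
    intro x hx
    simp only [Function.mem_support, hrdef] at hx ⊢
    intro h0
    exact hx (by rw [h0, zero_div])
  have hrc : HasCompactSupport r := hφc.of_isClosed_subset (isClosed_tsupport r) hrsupp
  have hwc : HasCompactSupport w := hφc.mul_right
  -- U agrees with u on V
  have hUu : Set.EqOn U u V := fun x hx => by simp [hUdef, hV1 x hx]
  have hfdUV : ∀ x ∈ V, fderiv ℝ U x = fderiv ℝ u x := fun x hx =>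
    (Filter.eventuallyEq_of_mem (hVo.mem_nhds hx) hUu).fderiv_eq
  have hlap : ∀ x ∈ V, laplacian U x = laplacian u x := by
    intro x hx
    unfold laplacian
    refine Finset.sum_congr rfl fun i _ => ?_
    have hev : (fun y => fderiv ℝ U y (EuclideanSpace.single i (1:ℝ))) =ᶠ[𝓝 x]
        (fun y => fderiv ℝ u y (EuclideanSpace.single i (1:ℝ))) := by
      filter_upwards [hVo.mem_nhds hx] with y hy
      rw [hfdUV y hy]
    rw [hev.fderiv_eq]
  -- continuity helpers
  have hgC1 : ∀ i, ContDiff ℝ 1 (fun x => fderiv ℝ U x (e i)) := fun i =>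
    (ContinuousLinearMap.apply ℝ ℝ (e i)).contDiff.comp (hUC2.fderiv_right (by norm_num))
  have hcr : Continuous r := hrC1.continuous
  have hcw : Continuous w := hwC1.continuous
  have hcDw : ∀ i, Continuous (fun x => fderiv ℝ w x (e i)) := fun i =>
    (ContinuousLinearMap.apply ℝ ℝ (e i)).continuous.comp (hwC1.continuous_fderiv one_ne_zero)
  have hcDφ : ∀ i, Continuous (fun x => fderiv ℝ φ x (e i)) := fun i =>
    (ContinuousLinearMap.apply ℝ ℝ (e i)).continuous.comp (hφ.continuous_fderiv one_ne_zero)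
  have hcDU : ∀ i, Continuous (fun x => fderiv ℝ U x (e i)) := fun i => (hgC1 i).continuous
  have hcDDU : ∀ i, Continuous (fun x => fderiv ℝ (fun y => fderiv ℝ U y (e i)) x (e i)) := fun i =>
    (ContinuousLinearMap.apply ℝ ℝ (e i)).continuous.comp ((hgC1 i).continuous_fderiv one_ne_zero)
  have hcsDw : ∀ i, HasCompactSupport (fun x => fderiv ℝ w x (e i)) := fun i =>
    (hwc.fderiv (𝕜 := ℝ)).comp_left (g := fun L : _ →L[ℝ] ℝ => L (e i)) (by simp)
  have hcsDφ : ∀ i, HasCompactSupport (fun x => fderiv ℝ φ x (e i)) := fun i =>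
    (hφc.fderiv (𝕜 := ℝ)).comp_left (g := fun L : _ →L[ℝ] ℝ => L (e i)) (by simp)
  have hIcs : ∀ f h : EuclideanSpace ℝ (Fin m) → ℝ, HasCompactSupport f →
      Continuous f → Continuous h → Integrable (fun x => f x * h x) := fun f h hfc hf hh =>
    (hf.mul hh).integrable_of_hasCompactSupport hfc.mul_right
  -- integration by parts
  have hibp : ∀ i : Fin m, ∫ x, w x * fderiv ℝ (fun y => fderiv ℝ U y (e i)) x (e i)
      = - ∫ x, fderiv ℝ w x (e i) * fderiv ℝ U x (e i) := fun i =>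
    integral_mul_fderiv_eq_neg_fderiv_mul_of_integrable
      (hIcs _ _ (hcsDw i) (hcDw i) (hcDU i))
      (hIcs w _ hwc hcw (hcDDU i))
      (hIcs _ _ hwc hcw (hcDU i))
      (fun x _ => hwC1.differentiable one_ne_zero x) (fun x _ => (hgC1 i).differentiable one_ne_zero x)
  have hIBP : ∫ x, w x * laplacian U x
      = - ∫ x, ∑ i, fderiv ℝ w x (e i) * fderiv ℝ U x (e i) := by
    have h1 : ∫ x, w x * laplacian U x
        = ∑ i, ∫ x, w x * fderiv ℝ (fun y => fderiv ℝ U y (e i)) x (e i) := by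
      rw [← integral_finset_sum _ (fun i _ => hIcs w _ hwc hcw (hcDDU i))]
      congr 1; funext x
      rw [laplacian, Finset.mul_sum]
    have h2 : ∫ x, ∑ i, fderiv ℝ w x (e i) * fderiv ℝ U x (e i)
        = ∑ i, ∫ x, fderiv ℝ w x (e i) * fderiv ℝ U x (e i) :=
      integral_finset_sum _ (fun i _ => hIcs _ _ (hcsDw i) (hcDw i) (hcDU i))
    rw [h1, h2]
    simp only [hibp]
    rw [← Finset.sum_neg_distrib]
  -- sign of the boundary-free term
  have hwlap : ∀ x, w x * laplacian U x ≤ 0 := by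
    intro x
    by_cases hx : x ∈ tsupport φ
    · have hxΩ : x ∈ Ω := hφsupp hx
      have hw0 : 0 ≤ w x := by
        have hwx : w x = φ x ^ 2 / u x := by simp only [hwdef, hrdef]; ring
        rw [hwx]
        exact div_nonneg (sq_nonneg _) (hupos x hxΩ).le
      rw [hlap x (hKV hx)]
      exact mul_nonpos_iff.mpr (Or.inl ⟨hw0, hsuper x hxΩ⟩)
    · simp [hwdef, hφ0 x hx]
  have hintS : 0 ≤ ∫ x, ∑ i, fderiv ℝ w x (e i) * fderiv ℝ U x (e i) := by
    have h3 : ∫ x, w x * laplacian U x ≤ 0 := integral_nonpos hwlap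
    linarith [hIBP]
  -- key pointwise identity
  have hkey : ∀ x, (∑ i, fderiv ℝ w x (e i) * fderiv ℝ U x (e i))
      = 2 * r x * (∑ i, fderiv ℝ U x (e i) * fderiv ℝ φ x (e i))
        - r x ^ 2 * (∑ i, (fderiv ℝ U x (e i)) ^ 2) := by
    intro x
    by_cases hx : x ∈ tsupport φ
    · have hxΩ : x ∈ Ω := hφsupp hx
      have hxV : x ∈ V := hKV hx
      have hud : DifferentiableAt ℝ u x :=
        ((hu.contDiffAt (hΩ.mem_nhds hxΩ)).of_le (by norm_num)).differentiableAt one_ne_zero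
      have hφd : DifferentiableAt ℝ φ x := hφ.differentiable one_ne_zero x
      have hrd : DifferentiableAt ℝ r x := hrC1.differentiable one_ne_zero x
      have hmulr : fderiv ℝ (fun y => u y * r y) x = fderiv ℝ φ x := by
        apply Filter.EventuallyEq.fderiv_eq
        filter_upwards [hΩ.mem_nhds hxΩ] with y hy
        simp only [hrdef]
        rw [mul_div_assoc']
        exact mul_div_cancel_left₀ _ (huΩ y hy)
      have hmulr2 := fderiv_mul hud hrd
      have hw2 := fderiv_mul hφd hrd
      have hDU := hfdUV x hxV
      have hφur : φ x = u x * r x := by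
        simp only [hrdef]
        rw [mul_div_assoc']
        exact (mul_div_cancel_left₀ _ (huΩ x hxΩ)).symm
      have hterm : ∀ i, fderiv ℝ w x (e i) * fderiv ℝ U x (e i)
          = 2 * r x * (fderiv ℝ U x (e i) * fderiv ℝ φ x (e i))
            - r x ^ 2 * (fderiv ℝ U x (e i)) ^ 2 := by
        intro i
        have h1 : u x * fderiv ℝ r x (e i) + r x * fderiv ℝ u x (e i) = fderiv ℝ φ x (e i) := by
          have h := congrArg (fun L : _ →L[ℝ] ℝ => L (e i)) (hmulr2.symm.trans hmulr)
          simpa [ContinuousLinearMap.add_apply, ContinuousLinearMap.smul_apply,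
            smul_eq_mul] using h
        have h2 : fderiv ℝ w x (e i)
            = φ x * fderiv ℝ r x (e i) + r x * fderiv ℝ φ x (e i) := by
          have h := congrArg (fun L : _ →L[ℝ] ℝ => L (e i)) hw2
          rw [show w = φ * r from rfl]
          simpa [ContinuousLinearMap.add_apply, ContinuousLinearMap.smul_apply,
            smul_eq_mul] using h
        rw [h2, hDU]
        linear_combination (r x * fderiv ℝ u x (e i)) * h1
          + (fderiv ℝ u x (e i) * fderiv ℝ r x (e i)) * hφur
      rw [show (∑ i, fderiv ℝ w x (e i) * fderiv ℝ U x (e i))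
          = ∑ i, (2 * r x * (fderiv ℝ U x (e i) * fderiv ℝ φ x (e i))
            - r x ^ 2 * (fderiv ℝ U x (e i)) ^ 2)
        from Finset.sum_congr rfl fun i _ => hterm i]
      rw [Finset.sum_sub_distrib, ← Finset.mul_sum, ← Finset.mul_sum]
    · have hfw : fderiv ℝ w x = 0 := by
        have hev : w =ᶠ[𝓝 x] (fun _ => (0:ℝ)) := by
          filter_upwards [(isClosed_tsupport φ).isOpen_compl.mem_nhds hx] with y hy
          simp [hwdef, hφ0 y hy]
        rw [hev.fderiv_eq]
        exact fderiv_const_apply 0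
      simp [hfw, hr0 x hx]
  -- integrability of the two pieces
  have hQint : Integrable (fun x => r x ^ 2 * ∑ i, (fderiv ℝ U x (e i)) ^ 2) :=
    hIcs _ _ (hrc.comp_left (g := fun t : ℝ => t ^ 2) (by simp)) (hcr.pow 2)
      (continuous_finset_sum _ fun i _ => (hcDU i).pow 2)
  have hPint : Integrable (fun x => 2 * r x * ∑ i, fderiv ℝ U x (e i) * fderiv ℝ φ x (e i)) :=
    hIcs _ _ (hrc.comp_left (g := fun t : ℝ => 2 * t) (by simp)) (continuous_const.mul hcr)
      (continuous_finset_sum _ fun i _ => (hcDU i).mul (hcDφ i))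
  have hA : ∫ x, r x ^ 2 * ∑ i, (fderiv ℝ U x (e i)) ^ 2
      ≤ ∫ x, 2 * r x * ∑ i, fderiv ℝ U x (e i) * fderiv ℝ φ x (e i) := by
    have hsplit : ∫ x, ∑ i, fderiv ℝ w x (e i) * fderiv ℝ U x (e i)
        = (∫ x, 2 * r x * ∑ i, fderiv ℝ U x (e i) * fderiv ℝ φ x (e i))
          - ∫ x, r x ^ 2 * ∑ i, (fderiv ℝ U x (e i)) ^ 2 := by
      rw [show (fun x => ∑ i, fderiv ℝ w x (e i) * fderiv ℝ U x (e i))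
          = fun x => (2 * r x * ∑ i, fderiv ℝ U x (e i) * fderiv ℝ φ x (e i))
            - r x ^ 2 * ∑ i, (fderiv ℝ U x (e i)) ^ 2 from funext hkey]
      exact integral_sub hPint hQint
    rw [hsplit] at hintS
    linarith
  -- Young inequality pointwise
  have hYint : Integrable (fun x => ∑ i, (fderiv ℝ φ x (e i)) ^ 2) := by
    apply Continuous.integrable_of_hasCompactSupport
      (continuous_finset_sum _ fun i _ => (hcDφ i).pow 2)
    have h1 := (hφc.fderiv (𝕜 := ℝ)).comp_left
      (g := fun L : _ →L[ℝ] ℝ => ∑ i, (L (e i)) ^ 2) (by simp)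
    exact h1
  have hyoung : ∀ x, 2 * r x * ∑ i, fderiv ℝ U x (e i) * fderiv ℝ φ x (e i)
      ≤ (1/2) * (r x ^ 2 * ∑ i, (fderiv ℝ U x (e i)) ^ 2)
        + 2 * ∑ i, (fderiv ℝ φ x (e i)) ^ 2 := by
    intro x
    have h : ∀ i, 2 * (r x * (fderiv ℝ U x (e i) * fderiv ℝ φ x (e i)))
        ≤ (1/2) * (r x ^ 2 * (fderiv ℝ U x (e i)) ^ 2) + 2 * (fderiv ℝ φ x (e i)) ^ 2 := by
      intro i
      nlinarith [sq_nonneg (r x * fderiv ℝ U x (e i) - 2 * fderiv ℝ φ x (e i))]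
    calc 2 * r x * ∑ i, fderiv ℝ U x (e i) * fderiv ℝ φ x (e i)
        = ∑ i, 2 * (r x * (fderiv ℝ U x (e i) * fderiv ℝ φ x (e i))) := by
          rw [Finset.mul_sum]
          exact Finset.sum_congr rfl fun i _ => by ring
      _ ≤ ∑ i, ((1/2) * (r x ^ 2 * (fderiv ℝ U x (e i)) ^ 2)
            + 2 * (fderiv ℝ φ x (e i)) ^ 2) := Finset.sum_le_sum fun i _ => h i
      _ = (1/2) * (r x ^ 2 * ∑ i, (fderiv ℝ U x (e i)) ^ 2)
            + 2 * ∑ i, (fderiv ℝ φ x (e i)) ^ 2 := by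
          rw [Finset.sum_add_distrib]
          simp only [← Finset.mul_sum]
  have hB : ∫ x, 2 * r x * ∑ i, fderiv ℝ U x (e i) * fderiv ℝ φ x (e i)
      ≤ (1/2) * (∫ x, r x ^ 2 * ∑ i, (fderiv ℝ U x (e i)) ^ 2)
        + 2 * ∫ x, ∑ i, (fderiv ℝ φ x (e i)) ^ 2 := by
    have := integral_mono hPint ((hQint.const_mul (1/2)).add (hYint.const_mul 2)) hyoung
    simp only [Pi.add_apply] at this
    rwa [integral_add (hQint.const_mul (1/2)) (hYint.const_mul 2),
      integral_const_mul, integral_const_mul] at this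
  -- translate the statement
  have hLHS : ∫ x in Ω, (‖gradient u x‖ ^ 2 / (u x) ^ 2) * (φ x) ^ 2
      = ∫ x, r x ^ 2 * ∑ i, (fderiv ℝ U x (e i)) ^ 2 := by
    have heq : Set.EqOn (fun x => (‖gradient u x‖ ^ 2 / (u x) ^ 2) * (φ x) ^ 2)
        (fun x => r x ^ 2 * ∑ i, (fderiv ℝ U x (e i)) ^ 2) Ω := by
      intro x hx
      by_cases hxK : x ∈ tsupport φ
      · have hxV := hKV hxK
        have hDU : ∀ i, fderiv ℝ U x (e i) = fderiv ℝ u x (e i) := fun i => by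
          rw [hfdUV x hxV]
        simp only [hgradnorm u x, hDU, hrdef]
        rw [div_pow]
        ring
      · simp [hφ0 x hxK, hr0 x hxK]
    rw [setIntegral_congr_fun hΩ.measurableSet heq]
    exact setIntegral_eq_integral_of_forall_compl_eq_zero fun x hx => by
      simp [hrΩ0 x hx]
  have hRHS : ∫ x in Ω, ‖gradient φ x‖ ^ 2 = ∫ x, ∑ i, (fderiv ℝ φ x (e i)) ^ 2 := by
    rw [setIntegral_congr_fun hΩ.measurableSet (fun x _ => hgradnorm φ x)]
    apply setIntegral_eq_integral_of_forall_compl_eq_zero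
    intro x hx
    have hx' : x ∉ tsupport φ := fun h => hx (hφsupp h)
    have h0 : fderiv ℝ φ x = 0 := by
      by_contra h
      exact hx' (support_fderiv_subset ℝ h)
    simp [h0]
  rw [hLHS, hRHS]
  linarith
end

section
/- Let m ≥ 1 be an integer, let p > 1 be real, let Ω ⊆ ℝ^m be open, and let u : Ω → ℝ be twice continuously differentiable with u(x) > 0 and ∇u(x) ≠ 0 for all x ∈ Ω, and suppose div(‖∇u‖^(p−2)·∇u)(x) ≤ 0 for all x ∈ Ω. Then for every continuously differentiable function φ : ℝ^m → ℝ with compact support contained in Ω one has ((p−1)/p)^p · ∫_Ω (‖∇u(x)‖/u(x))^p · |φ(x)|^p dx ≤ ∫_Ω ‖∇φ(x)‖^p dx, with integrals taken with respect to Lebesgue measure. -/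
open MeasureTheory

/-- Divergence of a vector field on `ℝ^m`: the sum of the partial derivatives of the
coordinate functions in the directions of the standard basis. -/
noncomputable def diverg {m : ℕ}
    (F : EuclideanSpace ℝ (Fin m) → EuclideanSpace ℝ (Fin m))
    (x : EuclideanSpace ℝ (Fin m)) : ℝ :=
  ∑ i, fderiv ℝ (fun y => F y i) x (EuclideanSpace.single i (1 : ℝ))

open Set

section Aux

lemma pi_div_integral_zero {n : ℕ} (W : (Fin (n+1) → ℝ) → (Fin (n+1) → ℝ))
    (W' : (Fin (n+1) → ℝ) → ((Fin (n+1) → ℝ) →L[ℝ] (Fin (n+1) → ℝ)))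
    (hd : ∀ x, HasFDerivAt W (W' x) x) (hsupp : HasCompactSupport W)
    (hcont : Continuous fun x => ∑ i, W' x (Pi.single i 1) i) :
    ∫ x, ∑ i, W' x (Pi.single i 1) i = 0 := by
  obtain ⟨R, hR0, hR⟩ := hsupp.isBounded.subset_closedBall_lt 0 0
  set a : Fin (n+1) → ℝ := fun _ => -(R+1) with ha
  set b : Fin (n+1) → ℝ := fun _ => (R+1) with hb
  have hle : a ≤ b := fun i => by simp only [ha, hb]; linarith
  have habs : ∀ (x : Fin (n+1) → ℝ), ‖x‖ ≤ R → ∀ i, |x i| ≤ R := by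
    intro x hx i
    calc |x i| = ‖x i‖ := (Real.norm_eq_abs _).symm
    _ ≤ ‖x‖ := norm_le_pi_norm x i
    _ ≤ R := hx
  have hball : Metric.closedBall (0 : Fin (n+1) → ℝ) R ⊆ Icc a b := by
    intro x hx
    rw [Metric.mem_closedBall, dist_zero_right] at hx
    constructor <;> intro i <;> have := abs_le.1 (habs x hx i)
    · show -(R+1) ≤ x i; linarith [this.1]
    · show x i ≤ R+1; linarith [this.2]
  have hW0 : ∀ y, y ∉ Metric.closedBall (0 : Fin (n+1) → ℝ) R → W y = 0 := fun y hy =>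
    image_eq_zero_of_notMem_tsupport (fun h => hy (hR h))
  have hWc : Continuous W := by
    have : Differentiable ℝ W := fun x => (hd x).differentiableAt
    exact this.continuous
  have key := MeasureTheory.integral_divergence_of_hasFDerivAt_off_countable a b hle W W'
    ∅ countable_empty hWc.continuousOn (fun x _ => hd x)
    ((hcont.continuousOn).integrableOn_compact isCompact_Icc)
  have hfaces : ∀ (i : Fin (n+1)) (c : ℝ), R < |c| → ∀ x : Fin n → ℝ,
      W (i.insertNth c x) i = 0 := by
    intro i c hc x
    have hnm : i.insertNth c x ∉ Metric.closedBall (0 : Fin (n+1) → ℝ) R := by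
      rw [Metric.mem_closedBall, dist_zero_right]
      intro h
      have h2 := habs _ h i
      rw [Fin.insertNth_apply_same] at h2
      linarith
    rw [hW0 _ hnm]; rfl
  have hRHS : (∑ i : Fin (n+1),
      ((∫ x in Icc (a ∘ i.succAbove) (b ∘ i.succAbove), W (i.insertNth (b i) x) i) -
        ∫ x in Icc (a ∘ i.succAbove) (b ∘ i.succAbove), W (i.insertNth (a i) x) i)) = 0 := by
    apply Finset.sum_eq_zero
    intro i _
    have h1 : ∀ x : Fin n → ℝ, W (i.insertNth (b i) x) i = 0 :=
      hfaces i (b i) (by show R < |R+1|; rw [abs_of_pos (by linarith)]; linarith)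
    have h2 : ∀ x : Fin n → ℝ, W (i.insertNth (a i) x) i = 0 :=
      hfaces i (a i) (by show R < |-(R+1)|; rw [abs_neg, abs_of_pos (by linarith)]; linarith)
    simp only [h1, h2, integral_zero, sub_zero]
  rw [hRHS] at key
  rw [← key]
  refine (setIntegral_eq_integral_of_forall_compl_eq_zero (fun x hx => ?_)).symm
  have hxb : x ∉ Metric.closedBall (0 : Fin (n+1) → ℝ) R := fun h => hx (hball h)
  have hW'0 : W' x = 0 := by
    have h0 : HasFDerivAt W (0 : (Fin (n+1) → ℝ) →L[ℝ] _) x := by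
      have heq : W =ᶠ[nhds x] (fun _ => 0) := by
        filter_upwards [Metric.isClosed_closedBall.isOpen_compl.mem_nhds hxb] with y hy
        exact hW0 y hy
      exact (hasFDerivAt_const (0 : Fin (n+1) → ℝ) x).congr_of_eventuallyEq heq
    exact (hd x).unique h0
  simp [hW'0]

lemma euclid_div_integral_zero {m : ℕ} (hm : 1 ≤ m)
    (W : EuclideanSpace ℝ (Fin m) → EuclideanSpace ℝ (Fin m))
    (W' : EuclideanSpace ℝ (Fin m) → (EuclideanSpace ℝ (Fin m) →L[ℝ] EuclideanSpace ℝ (Fin m)))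
    (hd : ∀ x, HasFDerivAt W (W' x) x) (hsupp : HasCompactSupport W)
    (hcont : Continuous fun x => ∑ i, W' x (EuclideanSpace.single i (1:ℝ)) i) :
    ∫ x, ∑ i, W' x (EuclideanSpace.single i (1:ℝ)) i = 0 := by
  obtain ⟨n, rfl⟩ : ∃ n, m = n + 1 := ⟨m - 1, (Nat.succ_pred_eq_of_pos hm).symm⟩
  set eL := EuclideanSpace.equiv (Fin (n+1)) ℝ with heL
  set g : (Fin (n+1) → ℝ) → (Fin (n+1) → ℝ) := fun y => eL (W (eL.symm y)) with hg
  set g' : (Fin (n+1) → ℝ) → ((Fin (n+1) → ℝ) →L[ℝ] (Fin (n+1) → ℝ)) :=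
    fun y => ((eL.toContinuousLinearMap.comp (W' (eL.symm y))).comp
      eL.symm.toContinuousLinearMap) with hg'
  have hd' : ∀ y, HasFDerivAt g (g' y) y := by
    intro y
    have h1 : HasFDerivAt (fun y => W (eL.symm y))
        ((W' (eL.symm y)).comp eL.symm.toContinuousLinearMap) y :=
      (hd (eL.symm y)).comp y (eL.symm.toContinuousLinearMap.hasFDerivAt)
    have h2 := (eL.toContinuousLinearMap.hasFDerivAt).comp y h1
    exact h2.congr_fderiv (by rw [hg']; rfl)
  have hsupp' : HasCompactSupport g := by
    have h1 : HasCompactSupport (W ∘ eL.symm.toHomeomorph) :=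
      hsupp.comp_homeomorph eL.symm.toHomeomorph
    exact h1.comp_left (g := eL) (map_zero eL)
  have hsingle : ∀ i : Fin (n+1), eL.symm (Pi.single i (1:ℝ)) = EuclideanSpace.single i 1 := by
    intro i
    rfl
  have hdiv : ∀ y, (∑ i, g' y (Pi.single i 1) i) =
      ∑ i, W' (eL.symm y) (EuclideanSpace.single i (1:ℝ)) i := by
    intro y
    refine Finset.sum_congr rfl fun i _ => ?_
    rw [hg']
    simp only [ContinuousLinearMap.coe_comp', Function.comp_apply,
      ContinuousLinearEquiv.coe_coe]
    rw [hsingle i]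
    rfl
  have hcont' : Continuous fun y => ∑ i, g' y (Pi.single i 1) i := by
    have : (fun y => ∑ i, g' y (Pi.single i 1) i) =
        (fun x => ∑ i, W' x (EuclideanSpace.single i (1:ℝ)) i) ∘ (fun y => eL.symm y) := by
      funext y; exact hdiv y
    rw [this]
    exact hcont.comp eL.symm.continuous
  have hzero := pi_div_integral_zero g g' hd' hsupp' hcont'
  have htrans := (MeasurePreserving.symm (MeasurableEquiv.toLp 2 (Fin (n+1) → ℝ)).symm (EuclideanSpace.volume_preserving_symm_measurableEquiv_toLp (Fin (n+1)))).integral_comp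
    (MeasurableEquiv.toLp 2 (Fin (n+1) → ℝ)).symm.symm.measurableEmbedding
    (fun x => ∑ i, W' x (EuclideanSpace.single i (1:ℝ)) i)
  rw [← htrans]
  rw [← hzero]
  refine integral_congr_ae (Filter.Eventually.of_forall fun y => ?_)
  simp only [hdiv y]
  rfl

lemma young_weighted {p a b : ℝ} (hp : 1 < p) (ha : 0 ≤ a) (hb : 0 ≤ b) :
    p * a ^ (p - 1) * b ≤ ((p - 1)^2 / p) * a ^ p + ((p - 1) / p) ^ (1 - p) * b ^ p := by
  set s : ℝ := (p - 1) / p with hs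
  have hp0 : (0:ℝ) < p := by linarith
  have hs0 : (0:ℝ) < s := div_pos (by linarith) hp0
  set q : ℝ := p / (p - 1) with hq
  have hq0 : (0:ℝ) < q := div_pos hp0 (by linarith)
  have hq1 : 1 < q := (one_lt_div (by linarith)).2 (by linarith)
  have hconj : Real.HolderConjugate q p := (Real.HolderConjugate.conjExponent hp).symm
  set c : ℝ := s ^ (1 / q) with hc
  have hc0 : 0 < c := Real.rpow_pos_of_pos hs0 _
  have hX : 0 ≤ c * a ^ (p - 1) := mul_nonneg hc0.le (Real.rpow_nonneg ha _)
  have hY : 0 ≤ b / c := div_nonneg hb hc0.le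
  have hY2 := Real.young_inequality_of_nonneg hX hY hconj
  have hXY : (c * a ^ (p - 1)) * (b / c) = a ^ (p - 1) * b := by
    field_simp
  have hcq : c ^ q = s := by
    rw [hc, ← Real.rpow_mul hs0.le, one_div_mul_cancel hq0.ne', Real.rpow_one]
  have hcp : c ^ p = s ^ (p - 1) := by
    rw [hc, ← Real.rpow_mul hs0.le]
    congr 1
    rw [hq]; field_simp
  have hXq : (c * a ^ (p - 1)) ^ q = s * a ^ p := by
    rw [Real.mul_rpow hc0.le (Real.rpow_nonneg ha _), hcq,
      ← Real.rpow_mul ha]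
    congr 2
    rw [hq]; field_simp
    rw [div_self (by linarith : p - 1 ≠ 0)]
  have hYp : (b / c) ^ p = s ^ (1 - p) * b ^ p := by
    rw [Real.div_rpow hb hc0.le, hcp, div_eq_mul_inv, ← Real.rpow_neg hs0.le]
    rw [show -(p-1) = 1 - p by ring]
    ring
  rw [hXY, hXq, hYp] at hY2
  have hfin : p * (a ^ (p-1) * b) ≤ p * ((s * a ^ p) / q + (s ^ (1-p) * b ^ p) / p) :=
    mul_le_mul_of_nonneg_left hY2 hp0.le
  calc p * a ^ (p - 1) * b = p * (a ^ (p-1) * b) := by ring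
  _ ≤ p * ((s * a ^ p) / q + (s ^ (1-p) * b ^ p) / p) := hfin
  _ = (p / q * s) * a ^ p + s ^ (1-p) * b ^ p := by field_simp
  _ = ((p - 1)^2 / p) * a ^ p + s ^ (1 - p) * b ^ p := by
      congr 2
      rw [hq, hs]; field_simp

lemma rpow_succ_base (c : ℝ) (hc : 0 < c) (q : ℝ) : c ^ q * c = c ^ (q + 1) :=
  (Real.rpow_add_one hc.ne' q).symm

lemma pointwise_bound {p n1 u0 t d b : ℝ} (hp : 1 < p) (hn1 : 0 < n1) (hu0 : 0 < u0)
    (hb : 0 ≤ b) (hd : |d| ≤ b * n1) :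
    ‖t‖ ^ p * ((1 - p) * u0 ^ (1 - p - 1) * (n1 ^ (p - 2) * (n1 * n1)))
      + u0 ^ (1 - p) * (p * ‖t‖ ^ (p - 2) * (t * (n1 ^ (p - 2) * d)))
    ≤ ((p - 1) / p) ^ (1 - p) * b ^ p - ((p - 1) / p) * ((n1 / u0) ^ p * |t| ^ p) := by
  have hp0 : (0:ℝ) < p := by linarith
  have htn : ‖t‖ = |t| := Real.norm_eq_abs t
  set a : ℝ := n1 * |t| / u0 with ha_def
  have ha0 : 0 ≤ a := by positivity
  -- rpow identities
  have hup : u0 ^ (1 - p - 1) = u0 ^ (-p) := by congr 1; ring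
  have hunp : u0 ^ (1 - p) = u0 ^ (-(p-1)) := by congr 1; ring
  have hn1p : n1 ^ (p - 2) * (n1 * n1) = n1 ^ p := by
    calc n1 ^ (p - 2) * (n1 * n1) = (n1 ^ (p-2) * n1) * n1 := by ring
    _ = n1 ^ (p - 1) * n1 := by rw [rpow_succ_base n1 hn1, show p - 2 + 1 = p - 1 by ring]
    _ = n1 ^ p := by rw [rpow_succ_base n1 hn1, show p - 1 + 1 = p by ring]
  have hap : a ^ p = n1 ^ p * |t| ^ p * u0 ^ (-p) := by
    rw [ha_def, Real.div_rpow (by positivity) hu0.le,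
      Real.mul_rpow hn1.le (abs_nonneg t), Real.rpow_neg hu0.le, div_eq_mul_inv]
  have hap1 : a ^ (p - 1) = n1 ^ (p-1) * |t| ^ (p-1) * u0 ^ (-(p-1)) := by
    rw [ha_def, Real.div_rpow (by positivity) hu0.le,
      Real.mul_rpow hn1.le (abs_nonneg t), Real.rpow_neg hu0.le, div_eq_mul_inv]
  -- first term equality
  have hterm1 : ‖t‖ ^ p * ((1 - p) * u0 ^ (1 - p - 1) * (n1 ^ (p - 2) * (n1 * n1)))
      = -((p - 1) * a ^ p) := by
    rw [htn, hup, hn1p, hap]; ring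
  -- second term bound
  have hcore : ‖t‖ ^ (p - 2) * (t * (n1 ^ (p - 2) * d)) ≤ |t| ^ (p-1) * (n1 ^ (p-1) * b) := by
    rcases eq_or_ne t 0 with rfl | h0
    · rw [norm_zero, abs_zero, Real.zero_rpow (show p - 1 ≠ 0 by intro h; linarith)]
      simp
    · have htpos : 0 < |t| := abs_pos.2 h0
      have h1 : t * (n1 ^ (p-2) * d) ≤ |t| * (n1 ^ (p-2) * (b * n1)) := by
        calc t * (n1 ^ (p-2) * d) ≤ |t * (n1 ^ (p-2) * d)| := le_abs_self _
        _ = |t| * (n1 ^ (p-2) * |d|) := by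
            rw [abs_mul, abs_mul, abs_of_nonneg (Real.rpow_nonneg hn1.le _)]
        _ ≤ |t| * (n1 ^ (p-2) * (b * n1)) := by
            have h2 : n1 ^ (p-2) * |d| ≤ n1 ^ (p-2) * (b * n1) :=
              mul_le_mul_of_nonneg_left hd (Real.rpow_nonneg hn1.le _)
            exact mul_le_mul_of_nonneg_left h2 (abs_nonneg t)
      calc ‖t‖^(p-2) * (t * (n1^(p-2) * d)) ≤ ‖t‖^(p-2) * (|t| * (n1^(p-2) * (b * n1))) :=
            mul_le_mul_of_nonneg_left h1 (Real.rpow_nonneg (norm_nonneg _) _)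
      _ = (|t|^(p-2) * |t|) * ((n1^(p-2) * n1) * b) := by rw [htn]; ring
      _ = |t|^(p-1) * (n1^(p-1) * b) := by
            rw [rpow_succ_base _ htpos, rpow_succ_base _ hn1,
              show p - 2 + 1 = p - 1 by ring]
  have hterm2 : u0 ^ (1 - p) * (p * ‖t‖ ^ (p - 2) * (t * (n1 ^ (p - 2) * d)))
      ≤ p * a ^ (p-1) * b := by
    have hbase : u0 ^ (1-p) * (‖t‖ ^ (p - 2) * (t * (n1 ^ (p - 2) * d)))
        ≤ u0 ^ (1-p) * (|t| ^ (p-1) * (n1 ^ (p-1) * b)) :=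
      mul_le_mul_of_nonneg_left hcore (Real.rpow_nonneg hu0.le _)
    calc u0 ^ (1 - p) * (p * ‖t‖ ^ (p - 2) * (t * (n1 ^ (p - 2) * d)))
        = p * (u0 ^ (1-p) * (‖t‖ ^ (p - 2) * (t * (n1 ^ (p - 2) * d)))) := by ring
    _ ≤ p * (u0 ^ (1-p) * (|t| ^ (p-1) * (n1 ^ (p-1) * b))) :=
        mul_le_mul_of_nonneg_left hbase hp0.le
    _ = p * a ^ (p-1) * b := by rw [hap1, hunp]; ring
  -- Young
  have hyoung := young_weighted hp ha0 hb
  -- final assembly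
  have hgoal : (n1 / u0) ^ p * |t| ^ p = a ^ p := by
    rw [hap, Real.div_rpow hn1.le hu0.le, Real.rpow_neg hu0.le, div_eq_mul_inv]; ring
  rw [hterm1, hgoal]
  have hco : -((p - 1) * a ^ p) + ((p - 1)^2 / p) * a ^ p = -(((p - 1) / p) * a ^ p) := by
    field_simp; ring
  linarith [hterm2, hyoung, hco]

lemma fderiv_coord {m : ℕ} {F : EuclideanSpace ℝ (Fin m) → EuclideanSpace ℝ (Fin m)}
    {x : EuclideanSpace ℝ (Fin m)} (h : DifferentiableAt ℝ F x) (i : Fin m)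
    (v : EuclideanSpace ℝ (Fin m)) :
    fderiv ℝ (fun y => F y i) x v = (fderiv ℝ F x v) i := by
  have h1 : (fun y => F y i) = (EuclideanSpace.proj (𝕜 := ℝ) i) ∘ F := rfl
  rw [h1, fderiv_comp x (EuclideanSpace.proj (𝕜 := ℝ) i).differentiableAt h, ContinuousLinearMap.fderiv]
  simp

lemma diverg_eq_sum {m : ℕ} {F : EuclideanSpace ℝ (Fin m) → EuclideanSpace ℝ (Fin m)}
    {x : EuclideanSpace ℝ (Fin m)} (h : DifferentiableAt ℝ F x) :
    diverg F x = ∑ i, (fderiv ℝ F x (EuclideanSpace.single i (1:ℝ))) i := by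
  unfold diverg
  exact Finset.sum_congr rfl fun i _ => fderiv_coord h i _

lemma euclid_expand {m : ℕ} (v : EuclideanSpace ℝ (Fin m)) :
    ∑ i, v i • EuclideanSpace.single i (1:ℝ) = v := by
  ext j
  rw [WithLp.ofLp_sum, Finset.sum_apply]
  simp [EuclideanSpace.single_apply]

end Aux

set_option maxHeartbeats 2000000 in
/-- Item 5) of Proposition 3.5 of the paper (Hardy inequality (3.27)) with `f ≡ 0`, for a
classical positive solution of `Δ_p u = div(‖∇u‖^(p−2)∇u) ≤ 0` on an open `Ω ⊆ ℝ^m` with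
nowhere vanishing gradient: `((p−1)/p)^p (‖∇u‖/u)^p` is a Hardy weight for the
`p`-Laplacian on `Ω`. -/
theorem hardy_pLaplacian (m : ℕ) (hm : 1 ≤ m) (p : ℝ) (hp : 1 < p)
    (Ω : Set (EuclideanSpace ℝ (Fin m))) (hΩ : IsOpen Ω)
    (u : EuclideanSpace ℝ (Fin m) → ℝ)
    (hu : ContDiffOn ℝ 2 u Ω) (hupos : ∀ x ∈ Ω, 0 < u x)
    (hgrad : ∀ x ∈ Ω, gradient u x ≠ 0)
    (hsuper : ∀ x ∈ Ω,
      diverg (fun y => ‖gradient u y‖ ^ (p - 2) • gradient u y) x ≤ 0)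
    (φ : EuclideanSpace ℝ (Fin m) → ℝ) (hφ : ContDiff ℝ 1 φ)
    (hφc : HasCompactSupport φ) (hφsupp : tsupport φ ⊆ Ω) :
    ((p - 1) / p) ^ p * ∫ x in Ω, (‖gradient u x‖ / u x) ^ p * |φ x| ^ p ≤
      ∫ x in Ω, ‖gradient φ x‖ ^ p := by
  classical
  have hp0 : (0:ℝ) < p := by linarith
  have hp1 : p ≠ 0 := hp0.ne'
  set s : ℝ := (p - 1) / p with hs_def
  have hs0 : 0 < s := div_pos (by linarith) hp0
  set V := fun y => ‖gradient u y‖ ^ (p - 2) • gradient u y with hV_def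
  set A := fun x => ‖φ x‖ ^ p with hA_def
  set B := fun x => (u x) ^ (1 - p) with hB_def
  set ψ := fun x => A x * B x with hψ_def
  -- basic regularity
  have hφd : Differentiable ℝ φ := hφ.differentiable one_ne_zero
  have hA1 : ContDiff ℝ 1 A := hφ.norm_rpow hp
  have hAd : Differentiable ℝ A := hA1.differentiable one_ne_zero
  have hA' : ∀ x, fderiv ℝ A x = (p * ‖φ x‖ ^ (p - 2)) • (innerSL ℝ (φ x)).comp (fderiv ℝ φ x) :=
    fun x => hφd.fderiv_norm_rpow hp
  have hud : ∀ x ∈ Ω, DifferentiableAt ℝ u x := fun x hx =>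
    (hu.differentiableOn (by norm_num)).differentiableAt (hΩ.mem_nhds hx)
  have hB' : ∀ x ∈ Ω, HasFDerivAt B (((1 - p) * u x ^ (1 - p - 1)) • fderiv ℝ u x) x := fun x hx =>
    (Real.hasDerivAt_rpow_const (Or.inl (hupos x hx).ne')).comp_hasFDerivAt x
      (hud x hx).hasFDerivAt
  set ψ' := fun x => A x • (((1 - p) * u x ^ (1 - p - 1)) • fderiv ℝ u x) + B x • fderiv ℝ A x
    with hψ'_def
  have hψd : ∀ x ∈ Ω, HasFDerivAt ψ (ψ' x) x := fun x hx =>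
    ((hAd x).hasFDerivAt).mul (hB' x hx)
  have hgradC : ContDiffOn ℝ 1 (gradient u) Ω := by
    have h1 : ContDiffOn ℝ 1 (fderiv ℝ u) Ω := hu.fderiv_of_isOpen hΩ (by norm_num)
    exact ((InnerProductSpace.toDual ℝ _).symm.contDiff).comp_contDiffOn h1
  have hVC : ContDiffOn ℝ 1 V Ω := by
    intro x hx
    have hGx : ContDiffAt ℝ 1 (gradient u) x := hgradC.contDiffAt (hΩ.mem_nhds hx)
    have hnorm : ContDiffAt ℝ 1 (fun y => ‖gradient u y‖ ^ (p - 2)) x :=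
      (hGx.norm ℝ (hgrad x hx)).rpow_const_of_ne (norm_ne_zero_iff.2 (hgrad x hx))
    exact (hnorm.smul hGx).contDiffWithinAt
  have hVd : ∀ x ∈ Ω, DifferentiableAt ℝ V x := fun x hx =>
    (hVC.contDiffAt (hΩ.mem_nhds hx)).differentiableAt one_ne_zero
  have hVcont' : ContinuousOn (fderiv ℝ V) Ω := hVC.continuousOn_fderiv_of_isOpen hΩ le_rfl
  -- the vector field and its derivative
  set W := fun x => ψ x • V x with hW_def
  set W' := fun x => if x ∈ Ω then ψ x • fderiv ℝ V x + (ψ' x).smulRight (V x) else 0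
    with hW'_def
  have hψ0 : ∀ x, x ∉ tsupport φ → ψ x = 0 := by
    intro x hx
    have h0 : φ x = 0 := image_eq_zero_of_notMem_tsupport hx
    show A x * B x = 0
    have : A x = 0 := by
      show ‖φ x‖ ^ p = 0
      rw [h0, norm_zero, Real.zero_rpow hp1]
    rw [this, zero_mul]
  have hW0 : ∀ x, x ∉ tsupport φ → W x = 0 := by
    intro x hx
    show ψ x • V x = 0
    rw [hψ0 x hx, zero_smul]
  have hWsupp : HasCompactSupport W := HasCompactSupport.intro hφc hW0
  have hWd : ∀ x, HasFDerivAt W (W' x) x := by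
    intro x
    by_cases hx : x ∈ Ω
    · have : W' x = ψ x • fderiv ℝ V x + (ψ' x).smulRight (V x) := by
        rw [hW'_def]; simp only [if_pos hx]
      rw [this]
      exact (hψd x hx).smul ((hVd x hx).hasFDerivAt)
    · have hx' : x ∉ tsupport φ := fun h => hx (hφsupp h)
      have heq : (fun _ => (0 : EuclideanSpace ℝ (Fin m))) =ᶠ[nhds x] W := by
        filter_upwards [(isClosed_tsupport φ).isOpen_compl.mem_nhds hx'] with y hy
        exact (hW0 y hy).symm
      have : W' x = 0 := by rw [hW'_def]; simp only [if_neg hx]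
      rw [this]
      exact (hasFDerivAt_const (0 : EuclideanSpace ℝ (Fin m)) x).congr_of_eventuallyEq heq.symm
  have hW'0 : ∀ x, x ∉ tsupport φ → W' x = 0 := by
    intro x hx
    have heq : (fun _ => (0 : EuclideanSpace ℝ (Fin m))) =ᶠ[nhds x] W := by
      filter_upwards [(isClosed_tsupport φ).isOpen_compl.mem_nhds hx] with y hy
      exact (hW0 y hy).symm
    exact (hWd x).unique
      ((hasFDerivAt_const (0 : EuclideanSpace ℝ (Fin m)) x).congr_of_eventuallyEq heq.symm)
  set DW := fun x => ∑ i, W' x (EuclideanSpace.single i (1:ℝ)) i with hDW_def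
  have hDW0 : ∀ x, x ∉ tsupport φ → DW x = 0 := by
    intro x hx
    show ∑ i, W' x (EuclideanSpace.single i (1:ℝ)) i = 0
    rw [hW'0 x hx]
    simp
  -- continuity of DW
  have hW'app : ∀ x ∈ Ω, ∀ i : Fin m,
      W' x (EuclideanSpace.single i (1:ℝ)) i
        = ψ x * (fderiv ℝ V x (EuclideanSpace.single i (1:ℝ))) i
          + ψ' x (EuclideanSpace.single i (1:ℝ)) * (V x) i := by
    intro x hx i
    have hW'x : W' x = ψ x • fderiv ℝ V x + (ψ' x).smulRight (V x) := by
      rw [hW'_def]; simp only [if_pos hx]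
    rw [hW'x, ContinuousLinearMap.add_apply, ContinuousLinearMap.smul_apply,
      ContinuousLinearMap.smulRight_apply, PiLp.add_apply, PiLp.smul_apply, PiLp.smul_apply]
    simp [smul_eq_mul]
  have hucont' : ContinuousOn (fderiv ℝ u) Ω := hu.continuousOn_fderiv_of_isOpen hΩ (by norm_num)
  have huc : ContinuousOn (fun x => u x ^ (1 - p)) Ω :=
    ContinuousOn.rpow_const hu.continuousOn (fun x hx => Or.inl (hupos x hx).ne')
  have hψcont : ContinuousOn ψ Ω := (hA1.continuous.continuousOn).mul huc
  have hψ'cont : ContinuousOn ψ' Ω := by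
    apply ContinuousOn.add
    · exact (hA1.continuous.continuousOn).smul
        ((continuousOn_const.mul (ContinuousOn.rpow_const hu.continuousOn
          (fun x hx => Or.inl (hupos x hx).ne'))).smul hucont')
    · exact huc.smul (hA1.continuous_fderiv one_ne_zero).continuousOn
  have hDWcontOn : ContinuousOn DW Ω := by
    have hcont1 : ContinuousOn (fun x => ∑ i : Fin m,
        (ψ x * (fderiv ℝ V x (EuclideanSpace.single i (1:ℝ))) i
          + ψ' x (EuclideanSpace.single i (1:ℝ)) * (V x) i)) Ω := by
      apply continuousOn_finset_sum
      intro i _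
      apply ContinuousOn.add
      · apply hψcont.mul
        exact (EuclideanSpace.proj (𝕜 := ℝ) i).continuous.comp_continuousOn
          (hVcont'.clm_apply continuousOn_const)
      · exact (hψ'cont.clm_apply continuousOn_const).mul
          ((EuclideanSpace.proj (𝕜 := ℝ) i).continuous.comp_continuousOn hVC.continuousOn)
    apply hcont1.congr
    intro x hx
    exact Finset.sum_congr rfl fun i _ => hW'app x hx i
  have hDWcont : Continuous DW := by
    rw [continuous_iff_continuousAt]
    intro x
    by_cases hx : x ∈ Ω
    · exact hDWcontOn.continuousAt (hΩ.mem_nhds hx)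
    · have hx' : x ∉ tsupport φ := fun h => hx (hφsupp h)
      have heq : DW =ᶠ[nhds x] (fun _ => (0:ℝ)) := by
        filter_upwards [(isClosed_tsupport φ).isOpen_compl.mem_nhds hx'] with y hy
        exact hDW0 y hy
      exact ContinuousAt.congr continuousAt_const heq.symm
  -- divergence theorem
  have hint : ∫ x, DW x = 0 := euclid_div_integral_zero hm W W' hWd hWsupp hDWcont
  -- key pointwise identity and bound
  set g := fun x => (‖gradient u x‖ / u x) ^ p * |φ x| ^ p with hg_def
  set hbf := fun x => ‖gradient φ x‖ ^ p with hhb_def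
  have hbound : ∀ x ∈ Ω, DW x ≤ s ^ (1 - p) * hbf x - s * g x := by
    intro x hx
    have hn1 : (0:ℝ) < ‖gradient u x‖ := norm_pos_iff.2 (hgrad x hx)
    have hu0 : (0:ℝ) < u x := hupos x hx
    have hfderiv_u : ∀ v, fderiv ℝ u x v = inner ℝ (gradient u x) v := fun v => by
      rw [gradient, InnerProductSpace.toDual_symm_apply]
    -- identity DW x = ψ x * diverg V x + ψ' x (V x)
    have hkey : DW x = ψ x * diverg V x + ψ' x (V x) := by
      show ∑ i, W' x (EuclideanSpace.single i (1:ℝ)) i = _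
      rw [Finset.sum_congr rfl (fun i _ => hW'app x hx i), Finset.sum_add_distrib,
        ← Finset.mul_sum]
      congr 1
      · rw [diverg_eq_sum (hVd x hx)]
      · calc ∑ i, ψ' x (EuclideanSpace.single i (1:ℝ)) * (V x) i
            = ∑ i, ψ' x ((V x) i • EuclideanSpace.single i (1:ℝ)) := by
              refine Finset.sum_congr rfl fun i _ => ?_
              rw [_root_.map_smul, smul_eq_mul, mul_comm]
          _ = ψ' x (∑ i, (V x) i • EuclideanSpace.single i (1:ℝ)) := (map_sum (ψ' x) _ _).symm
          _ = ψ' x (V x) := by rw [euclid_expand]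
    -- evaluation of ψ' x (V x)
    have happ_φ : fderiv ℝ φ x (V x)
        = ‖gradient u x‖ ^ (p - 2) * (fderiv ℝ φ x (gradient u x)) := by
      show fderiv ℝ φ x (‖gradient u x‖ ^ (p - 2) • gradient u x) = _
      rw [_root_.map_smul, smul_eq_mul]
    have happ_u : fderiv ℝ u x (V x)
        = ‖gradient u x‖ ^ (p - 2) * (‖gradient u x‖ * ‖gradient u x‖) := by
      show fderiv ℝ u x (‖gradient u x‖ ^ (p - 2) • gradient u x) = _
      rw [_root_.map_smul, smul_eq_mul, hfderiv_u, real_inner_self_eq_norm_mul_norm]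
    have hAx : fderiv ℝ A x (V x)
        = p * ‖φ x‖ ^ (p - 2) * (φ x * (‖gradient u x‖ ^ (p - 2)
            * fderiv ℝ φ x (gradient u x))) := by
      rw [hA' x, ContinuousLinearMap.smul_apply, ContinuousLinearMap.comp_apply,
        innerSL_apply_apply, happ_φ]
      have hinner : (inner ℝ (φ x) (‖gradient u x‖ ^ (p - 2) * fderiv ℝ φ x (gradient u x)) : ℝ)
          = φ x * (‖gradient u x‖ ^ (p - 2) * fderiv ℝ φ x (gradient u x)) := by
        simp [RCLike.inner_apply, mul_comm]
      rw [hinner, smul_eq_mul]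
    have hψ'V : ψ' x (V x)
        = ‖φ x‖ ^ p * ((1 - p) * u x ^ (1 - p - 1)
            * (‖gradient u x‖ ^ (p - 2) * (‖gradient u x‖ * ‖gradient u x‖)))
          + u x ^ (1 - p) * (p * ‖φ x‖ ^ (p - 2)
            * (φ x * (‖gradient u x‖ ^ (p - 2) * fderiv ℝ φ x (gradient u x)))) := by
      show (A x • (((1 - p) * u x ^ (1 - p - 1)) • fderiv ℝ u x) + B x • fderiv ℝ A x) (V x) = _
      rw [ContinuousLinearMap.add_apply, ContinuousLinearMap.smul_apply,
        ContinuousLinearMap.smul_apply, ContinuousLinearMap.smul_apply, happ_u, hAx]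
      show ‖φ x‖ ^ p • ((1 - p) * u x ^ (1 - p - 1)) • _ + u x ^ (1 - p) • _ = _
      simp only [smul_eq_mul]
    -- pointwise bound
    have hdle : |fderiv ℝ φ x (gradient u x)| ≤ ‖fderiv ℝ φ x‖ * ‖gradient u x‖ := by
      rw [← Real.norm_eq_abs]
      exact (fderiv ℝ φ x).le_opNorm _
    have hpb := pointwise_bound (t := φ x) (d := fderiv ℝ φ x (gradient u x))
      (b := ‖fderiv ℝ φ x‖) hp hn1 hu0 (norm_nonneg _) hdle
    have hψnn : 0 ≤ ψ x :=
      mul_nonneg (Real.rpow_nonneg (norm_nonneg _) _) (Real.rpow_nonneg hu0.le _)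
    have hdivV : ψ x * diverg V x ≤ 0 := mul_nonpos_iff.2 (Or.inl ⟨hψnn, hsuper x hx⟩)
    have hfbf : hbf x = ‖fderiv ℝ φ x‖ ^ p := by
      show ‖gradient φ x‖ ^ p = _
      have : ‖gradient φ x‖ = ‖fderiv ℝ φ x‖ := by
        rw [gradient]; exact LinearIsometryEquiv.norm_map _ _
      rw [this]
    rw [hkey, hfbf]
    calc ψ x * diverg V x + ψ' x (V x) ≤ ψ' x (V x) := by linarith
    _ ≤ s ^ (1 - p) * ‖fderiv ℝ φ x‖ ^ p
          - s * ((‖gradient u x‖ / u x) ^ p * |φ x| ^ p) := by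
        rw [hψ'V, hs_def]
        exact hpb
    _ = s ^ (1 - p) * ‖fderiv ℝ φ x‖ ^ p - s * g x := rfl
  -- integrability
  have hgradφcont : Continuous (gradient φ) :=
    ((InnerProductSpace.toDual ℝ _).symm.continuous).comp (hφ.continuous_fderiv one_ne_zero)
  have hbcont : Continuous hbf :=
    (hgradφcont.norm).rpow_const (fun x => Or.inr hp0.le)
  have hb0 : ∀ x, x ∉ tsupport φ → hbf x = 0 := by
    intro x hx
    have heq : (fun _ => (0:ℝ)) =ᶠ[nhds x] φ := by
      filter_upwards [(isClosed_tsupport φ).isOpen_compl.mem_nhds hx] with y hy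
      exact (image_eq_zero_of_notMem_tsupport hy).symm
    have hf0 : fderiv ℝ φ x = 0 := by
      rw [heq.fderiv_eq.symm]
      exact fderiv_const_apply 0
    show ‖gradient φ x‖ ^ p = 0
    rw [gradient, hf0]
    simp [Real.zero_rpow hp1]
  have hbint : Integrable hbf :=
    hbcont.integrable_of_hasCompactSupport (HasCompactSupport.intro hφc hb0)
  have hgcont : ContinuousOn g Ω := by
    have h1 : ContinuousOn (fun x => (‖gradient u x‖ / u x) ^ p) Ω :=
      ContinuousOn.rpow_const ((hgradC.continuousOn.norm).div (hu.continuousOn)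
        (fun x hx => (hupos x hx).ne')) (fun x hx => Or.inr hp0.le)
    have h2 : Continuous (fun x => |φ x| ^ p) :=
      (hφ.continuous.abs).rpow_const (fun x => Or.inr hp0.le)
    exact h1.mul h2.continuousOn
  have hg0 : ∀ x, x ∉ tsupport φ → g x = 0 := by
    intro x hx
    have h0 : φ x = 0 := image_eq_zero_of_notMem_tsupport hx
    show (‖gradient u x‖ / u x) ^ p * |φ x| ^ p = 0
    rw [h0, abs_zero, Real.zero_rpow hp1, mul_zero]
  have hgint : IntegrableOn g Ω := by
    have hK : IntegrableOn g (tsupport φ) := (hgcont.mono hφsupp).integrableOn_compact hφc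
    have hind : Integrable g := by
      have : (tsupport φ).indicator g = g :=
        indicator_eq_self.2 (Function.support_subset_iff'.2 hg0)
      rw [← this]
      exact hK.integrable_indicator (isClosed_tsupport φ).measurableSet
    exact hind.integrableOn
  have hDWint : IntegrableOn DW Ω :=
    (hDWcont.integrable_of_hasCompactSupport (HasCompactSupport.intro hφc hDW0)).integrableOn
  have hΩmeas : MeasurableSet Ω := hΩ.measurableSet
  have hbintΩ : IntegrableOn (fun x => s ^ (1 - p) * hbf x) Ω :=
    hbint.integrableOn.const_mul _
  have hgintΩ : IntegrableOn (fun x => s * g x) Ω := hgint.const_mul _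
  have hintΩ : ∫ x in Ω, DW x = 0 := by
    rw [setIntegral_eq_integral_of_forall_compl_eq_zero
      (fun x hx => hDW0 x (fun h => hx (hφsupp h)))]
    exact hint
  have hmono : (0:ℝ) ≤ ∫ x in Ω, (s ^ (1 - p) * hbf x - s * g x) := by
    rw [← hintΩ]
    exact setIntegral_mono_on hDWint (hbintΩ.sub hgintΩ) hΩmeas hbound
  rw [integral_sub hbintΩ hgintΩ, integral_const_mul, integral_const_mul] at hmono
  have hfin : s * ∫ x in Ω, g x ≤ s ^ (1 - p) * ∫ x in Ω, hbf x := by linarith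
  -- final rpow arithmetic
  have hsp1 : (0:ℝ) ≤ s ^ (p - 1) := Real.rpow_nonneg hs0.le _
  calc s ^ p * ∫ x in Ω, g x = s ^ (p - 1) * (s * ∫ x in Ω, g x) := by
        rw [← mul_assoc]
        congr 1
        rw [← Real.rpow_add_one hs0.ne' (p - 1)]
        norm_num
  _ ≤ s ^ (p - 1) * (s ^ (1 - p) * ∫ x in Ω, hbf x) := mul_le_mul_of_nonneg_left hfin hsp1
  _ = ∫ x in Ω, hbf x := by
        rw [← mul_assoc, ← Real.rpow_add hs0]
        norm_num
end

section
/- Let m ≥ 2 be an integer and let κ > 0 and t > 0 be real numbers. Then sinh(κt)^(m−1) · ∫_t^∞ sinh(κs)^(1−m) ds ≥ tanh(κt)/(2·m·κ). Equivalently, setting χ(t) = (1/4)·( sinh(κt)^(m−1) · ∫_t^∞ sinh(κs)^(1−m) ds )^(−2), one has √(χ(t)) ≤ m·κ·coth(κt) for all t > 0. -/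
open MeasureTheory Real

lemma aux_hasDerivAt (m : ℕ) (hm : 2 ≤ m) (κ : ℝ) (hκ : 0 < κ) (s : ℝ) (hs : 0 < s) :
    HasDerivAt (fun u => -(1/(m*κ)) * (Real.sinh (κ*u) ^ ((2:ℝ)-m) / Real.cosh (κ*u)))
      ((1/(m:ℝ)) * (((m:ℝ)-2) * Real.sinh (κ*s) ^ (1-(m:ℝ)) +
        Real.sinh (κ*s) ^ (3-(m:ℝ)) / Real.cosh (κ*s)^2)) s := by
  have hsinh : 0 < Real.sinh (κ*s) := Real.sinh_pos_iff.2 (by positivity)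
  have hcosh : 0 < Real.cosh (κ*s) := Real.cosh_pos _
  have h1 : HasDerivAt (fun u : ℝ => κ*u) κ s := by
    simpa using (hasDerivAt_id s).const_mul κ
  have hS : HasDerivAt (fun u => Real.sinh (κ*u)) (Real.cosh (κ*s) * κ) s :=
    (Real.hasDerivAt_sinh (κ*s)).comp s h1
  have hC : HasDerivAt (fun u => Real.cosh (κ*u)) (Real.sinh (κ*s) * κ) s :=
    (Real.hasDerivAt_cosh (κ*s)).comp s h1
  have hP : HasDerivAt (fun u => Real.sinh (κ*u) ^ ((2:ℝ)-m))
      (Real.cosh (κ*s) * κ * ((2:ℝ)-m) * Real.sinh (κ*s) ^ (((2:ℝ)-m)-1)) s :=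
    hS.rpow_const (Or.inl hsinh.ne')
  have hdiv := hP.div hC hcosh.ne'
  have hfin := hdiv.const_mul (-(1/(m*κ)))
  refine hfin.congr_deriv ?_
  have e1 : Real.sinh (κ*s) ^ (((2:ℝ)-m)-1) = Real.sinh (κ*s) ^ (1-(m:ℝ)) := by
    ring_nf
  have e2 : Real.sinh (κ*s) ^ ((2:ℝ)-m) * Real.sinh (κ*s) = Real.sinh (κ*s) ^ (3-(m:ℝ)) := by
    rw [← Real.rpow_add_one hsinh.ne']; ring_nf
  have hm0 : (m:ℝ) ≠ 0 := by positivity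
  rw [e1, ← e2]
  field_simp
  ring

/-- The claim (5.18) in the proof of Theorem 5.3 of the paper:
`ζ(t) = m g_κ'(t)/g_κ(t) − √(χ(t)) ≥ 0` on `(0,∞)`, where `g_κ(t) = sinh(κt)/κ`.
Equivalently, `sinh(κt)^(m−1) ∫_t^∞ sinh(κs)^(1−m) ds ≥ tanh(κt)/(2mκ)`. -/
theorem hyperbolic_zeta_nonneg (m : ℕ) (hm : 2 ≤ m) (κ t : ℝ) (hκ : 0 < κ) (ht : 0 < t) :
    Real.tanh (κ * t) / (2 * m * κ) ≤
      Real.sinh (κ * t) ^ ((m : ℝ) - 1) *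
        ∫ s in Set.Ioi t, Real.sinh (κ * s) ^ (1 - (m : ℝ)) := by
  have hm0 : (0:ℝ) < m := by exact_mod_cast lt_of_lt_of_le (by norm_num) hm
  have hm2 : (2:ℝ) ≤ m := by exact_mod_cast hm
  have hsinht : 0 < Real.sinh (κ*t) := Real.sinh_pos_iff.2 (by positivity)
  have hcosht : 0 < Real.cosh (κ*t) := Real.cosh_pos _
  have htanht : 0 < Real.tanh (κ*t) := by
    rw [Real.tanh_eq_sinh_div_cosh]; positivity
  set g : ℝ → ℝ := fun u => -(1/(m*κ)) * (Real.sinh (κ*u) ^ ((2:ℝ)-m) / Real.cosh (κ*u)) with hg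
  set g' : ℝ → ℝ := fun s => (1/(m:ℝ)) * (((m:ℝ)-2) * Real.sinh (κ*s) ^ (1-(m:ℝ)) +
      Real.sinh (κ*s) ^ (3-(m:ℝ)) / Real.cosh (κ*s)^2) with hg'
  have hder : ∀ x ∈ Set.Ici t, HasDerivAt g (g' x) x := fun x hx =>
    aux_hasDerivAt m hm κ hκ x (ht.trans_le hx)
  have hsinhpos : ∀ x, t ≤ x → 0 < Real.sinh (κ*x) := fun x hx =>
    Real.sinh_pos_iff.2 (by nlinarith)
  have hg'nonneg : ∀ x ∈ Set.Ici t, 0 ≤ g' x := by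
    intro x hx
    have h1 := hsinhpos x hx
    have h2 : 0 < Real.cosh (κ*x) := Real.cosh_pos _
    have h3 : (0:ℝ) ≤ (m:ℝ) - 2 := by linarith
    have h4 : 0 < Real.sinh (κ*x) ^ (1-(m:ℝ)) := Real.rpow_pos_of_pos h1 _
    have h5 : 0 < Real.sinh (κ*x) ^ (3-(m:ℝ)) := Real.rpow_pos_of_pos h1 _
    simp only [hg']
    positivity
  -- tendsto g at top to 0
  have htop : Filter.Tendsto (fun u : ℝ => κ*u) Filter.atTop Filter.atTop :=
    Filter.Tendsto.const_mul_atTop hκ Filter.tendsto_id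
  have hcoshtop : Filter.Tendsto (fun u => Real.cosh (κ*u)) Filter.atTop Filter.atTop := by
    apply Filter.tendsto_atTop_mono (fun u => ?_) ((Real.tendsto_exp_atTop.comp htop).atTop_div_const (by norm_num : (0:ℝ) < 2))
    have := Real.exp_pos (-(κ*u))
    simp only [Function.comp, Real.cosh_eq]
    linarith
  have hinv0 : Filter.Tendsto (fun u => (Real.cosh (κ*u))⁻¹) Filter.atTop (nhds 0) :=
    Filter.Tendsto.inv_tendsto_atTop hcoshtop
  have htend : Filter.Tendsto g Filter.atTop (nhds 0) := by
    have hbound : ∀ᶠ u in Filter.atTop, ‖g u‖ ≤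
        (1/(m*κ)) * Real.sinh (κ*t) ^ ((2:ℝ)-m) * (Real.cosh (κ*u))⁻¹ := by
      filter_upwards [Filter.eventually_ge_atTop t] with u hu
      have h1 := hsinhpos u hu
      have h2 : 0 < Real.cosh (κ*u) := Real.cosh_pos _
      have hmono : Real.sinh (κ*u) ^ ((2:ℝ)-m) ≤ Real.sinh (κ*t) ^ ((2:ℝ)-m) := by
        apply Real.rpow_le_rpow_of_nonpos hsinht
          (Real.sinh_le_sinh.2 (by nlinarith)) (by linarith)
      have hgu : ‖g u‖ = (1/(m*κ)) * (Real.sinh (κ*u) ^ ((2:ℝ)-m) / Real.cosh (κ*u)) := by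
        rw [hg, norm_eq_abs, abs_mul, abs_neg, abs_of_pos (by positivity : (0:ℝ) < 1/(m*κ)),
          abs_of_pos (by positivity : 0 < Real.sinh (κ*u) ^ ((2:ℝ)-m) / Real.cosh (κ*u))]
      rw [hgu]
      have hstep : Real.sinh (κ*u) ^ ((2:ℝ)-m) / Real.cosh (κ*u) ≤
          Real.sinh (κ*t) ^ ((2:ℝ)-m) * (Real.cosh (κ*u))⁻¹ := by
        rw [div_eq_mul_inv]
        exact mul_le_mul_of_nonneg_right hmono (by positivity)
      calc (1/((m:ℝ)*κ)) * (Real.sinh (κ*u) ^ ((2:ℝ)-m) / Real.cosh (κ*u))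
          ≤ (1/((m:ℝ)*κ)) * (Real.sinh (κ*t) ^ ((2:ℝ)-m) * (Real.cosh (κ*u))⁻¹) :=
            mul_le_mul_of_nonneg_left hstep (by positivity)
        _ = (1/((m:ℝ)*κ)) * Real.sinh (κ*t) ^ ((2:ℝ)-m) * (Real.cosh (κ*u))⁻¹ := by ring
    have hlim : Filter.Tendsto
        (fun u => (1/(m*κ)) * Real.sinh (κ*t) ^ ((2:ℝ)-m) * (Real.cosh (κ*u))⁻¹)
        Filter.atTop (nhds 0) := by
      simpa using hinv0.const_mul ((1/(m*κ)) * Real.sinh (κ*t) ^ ((2:ℝ)-m))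
    exact squeeze_zero_norm' hbound hlim
  have hg'nonneg' : ∀ x ∈ Set.Ioi t, 0 ≤ g' x := fun x hx => hg'nonneg x (Set.mem_Ici.2 (le_of_lt hx))
  have hint : ∫ x in Set.Ioi t, g' x = 0 - g t :=
    integral_Ioi_of_hasDerivAt_of_nonneg' hder hg'nonneg' htend
  have hg'integ : IntegrableOn g' (Set.Ioi t) :=
    integrableOn_Ioi_deriv_of_nonneg' hder hg'nonneg' htend
  set f : ℝ → ℝ := fun s => Real.sinh (κ*s) ^ (1-(m:ℝ)) with hf
  have hkey : ∀ x, t ≤ x → g' x = f x * (((m:ℝ)-2) + Real.tanh (κ*x)^2) / m := by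
    intro x hx
    have h1 := hsinhpos x hx
    have h2 : 0 < Real.cosh (κ*x) := Real.cosh_pos _
    have e2 : Real.sinh (κ*x) ^ (3-(m:ℝ)) =
        Real.sinh (κ*x) ^ (1-(m:ℝ)) * Real.sinh (κ*x)^2 := by
      rw [← Real.rpow_natCast (Real.sinh (κ*x)) 2, ← Real.rpow_add h1]
      congr 1
      push_cast; ring
    simp only [hg', hf, e2, Real.tanh_eq_sinh_div_cosh]
    field_simp
  have htanh2 : ∀ x, Real.tanh x ^ 2 < 1 := by
    intro x
    rw [Real.tanh_eq_sinh_div_cosh, div_pow, div_lt_one (by positivity)]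
    nlinarith [Real.cosh_sq x]
  -- g' ≤ f on Ioi t
  have hle : ∀ x ∈ Set.Ioi t, g' x ≤ f x := by
    intro x hx
    have hx' := le_of_lt (Set.mem_Ioi.1 hx)
    have hfpos : 0 < f x := Real.rpow_pos_of_pos (hsinhpos x hx') _
    rw [hkey x hx', div_le_iff₀ hm0]
    nlinarith [htanh2 (κ*x)]
  -- f ≤ C * g' on Ioi t
  have htanhmono : ∀ x, t ≤ x → Real.tanh (κ*t) ≤ Real.tanh (κ*x) := by
    intro x hx
    have hc2 : 0 < Real.cosh (κ*x) := Real.cosh_pos _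
    have hs : 0 ≤ Real.sinh (κ*x - κ*t) := by
      rw [← Real.sinh_zero]
      exact Real.sinh_le_sinh.2 (by nlinarith)
    rw [Real.sinh_sub] at hs
    rw [Real.tanh_eq_sinh_div_cosh, Real.tanh_eq_sinh_div_cosh,
      div_le_div_iff₀ hcosht hc2]
    nlinarith
  have hfleC : ∀ x ∈ Set.Ioi t, f x ≤ ((m:ℝ)/Real.tanh (κ*t)^2) * g' x := by
    intro x hx
    have hx' := le_of_lt (Set.mem_Ioi.1 hx)
    have hfpos : 0 < f x := Real.rpow_pos_of_pos (hsinhpos x hx') _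
    have hA : Real.tanh (κ*t)^2 ≤ ((m:ℝ)-2) + Real.tanh (κ*x)^2 := by
      have := htanhmono x hx'
      nlinarith
    rw [hkey x hx']
    have heq : ((m:ℝ)/Real.tanh (κ*t)^2) * (f x * (((m:ℝ)-2) + Real.tanh (κ*x)^2) / m) =
        f x * (((m:ℝ)-2) + Real.tanh (κ*x)^2) / Real.tanh (κ*t)^2 := by
      field_simp
    rw [heq, le_div_iff₀ (by positivity)]
    nlinarith
  -- integrability of f
  have hfmeas : AEStronglyMeasurable f (volume.restrict (Set.Ioi t)) := by
    apply ContinuousOn.aestronglyMeasurable _ measurableSet_Ioi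
    apply ContinuousOn.rpow_const
    · exact (Real.continuous_sinh.comp (continuous_const.mul continuous_id)).continuousOn
    · intro x hx
      exact Or.inl (hsinhpos x (le_of_lt (Set.mem_Ioi.1 hx))).ne'
  have hfinteg : IntegrableOn f (Set.Ioi t) := by
    apply Integrable.mono' (hg'integ.const_mul ((m:ℝ)/Real.tanh (κ*t)^2)) hfmeas
    filter_upwards [ae_restrict_mem measurableSet_Ioi] with x hx
    rw [norm_eq_abs, abs_of_pos (Real.rpow_pos_of_pos (hsinhpos x (le_of_lt (Set.mem_Ioi.1 hx))) _)]
    exact hfleC x hx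
  -- compare integrals
  have hmono : ∫ x in Set.Ioi t, g' x ≤ ∫ x in Set.Ioi t, f x :=
    setIntegral_mono_on hg'integ hfinteg measurableSet_Ioi hle
  have hlow : (1/((m:ℝ)*κ)) * (Real.sinh (κ*t) ^ ((2:ℝ)-m) / Real.cosh (κ*t)) ≤
      ∫ x in Set.Ioi t, f x := by
    have : (0:ℝ) - g t = (1/((m:ℝ)*κ)) * (Real.sinh (κ*t) ^ ((2:ℝ)-m) / Real.cosh (κ*t)) := by
      simp [hg]
    linarith [hint ▸ hmono, this ▸ (hint ▸ hmono)]
  -- final algebra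
  have epow : Real.sinh (κ*t) ^ ((m:ℝ)-1) * Real.sinh (κ*t) ^ ((2:ℝ)-m) = Real.sinh (κ*t) := by
    rw [← Real.rpow_add hsinht, show (m:ℝ)-1+(2-(m:ℝ)) = 1 by ring, Real.rpow_one]
  have hpow : (0:ℝ) < Real.sinh (κ*t) ^ ((m:ℝ)-1) := Real.rpow_pos_of_pos hsinht _
  calc Real.tanh (κ*t) / (2*m*κ) ≤ Real.tanh (κ*t) / (m*κ) :=
        div_le_div_of_nonneg_left htanht.le (by positivity) (by nlinarith)
    _ = Real.sinh (κ*t) ^ ((m:ℝ)-1) *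
        ((1/((m:ℝ)*κ)) * (Real.sinh (κ*t) ^ ((2:ℝ)-m) / Real.cosh (κ*t))) := by
      rw [Real.tanh_eq_sinh_div_cosh]
      rw [show Real.sinh (κ*t) ^ ((m:ℝ)-1) *
          ((1/((m:ℝ)*κ)) * (Real.sinh (κ*t) ^ ((2:ℝ)-m) / Real.cosh (κ*t))) =
          (Real.sinh (κ*t) ^ ((m:ℝ)-1) * Real.sinh (κ*t) ^ ((2:ℝ)-m)) *
            (1/((m:ℝ)*κ)) / Real.cosh (κ*t) by ring, epow]
      field_simp
    _ ≤ Real.sinh (κ*t) ^ ((m:ℝ)-1) * ∫ x in Set.Ioi t, f x :=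
        mul_le_mul_of_nonneg_left hlow hpow.le
end

section
/- Let α > 0 be real and let g₁, g₂ : (0,∞) → (0,∞) be continuous functions such that ∫_1^∞ g₁(s)^(−α) ds < ∞ and ∫_1^∞ g₂(s)^(−α) ds < ∞, and such that the ratio g₁/g₂ is non-decreasing on (0,∞). Then for every r > 0, g₁(r)^α · ∫_r^∞ g₁(s)^(−α) ds ≤ g₂(r)^α · ∫_r^∞ g₂(s)^(−α) ds. -/
open MeasureTheory Real Set

lemma aux_integrableOn (α : ℝ) (g : ℝ → ℝ) (hc : ContinuousOn g (Set.Ioi 0))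
    (hpos : ∀ s ∈ Set.Ioi (0 : ℝ), 0 < g s)
    (hint : IntegrableOn (fun s => g s ^ (-α)) (Set.Ioi 1)) (r : ℝ) (hr : 0 < r) :
    IntegrableOn (fun s => g s ^ (-α)) (Set.Ioi r) := by
  have hcont : ContinuousOn (fun s => g s ^ (-α)) (Set.Ioi 0) :=
    hc.rpow_const (fun x hx => Or.inl (ne_of_gt (hpos x hx)))
  have hsub : Set.Ioi r ⊆ Set.Ioc r (max 1 r) ∪ Set.Ioi 1 := by
    intro s hs
    rcases le_or_gt s (max 1 r) with h | h
    · exact Or.inl ⟨hs, h⟩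
    · exact Or.inr (lt_of_le_of_lt (le_max_left 1 r) h)
  apply IntegrableOn.mono_set _ hsub
  apply IntegrableOn.union _ hint
  apply IntegrableOn.mono_set _ Set.Ioc_subset_Icc_self
  exact (hcont.mono (fun x hx => lt_of_lt_of_le hr hx.1)).integrableOn_Icc

/-- The comparison result stated in Example 4.1 of the paper: if `g₁, g₂ : (0,∞) → (0,∞)`
are continuous with `∫_1^∞ gᵢ^(−α) < ∞` and `g₁/g₂` is non-decreasing on `(0,∞)`, then
`g₁(r)^α ∫_r^∞ g₁^(−α) ≤ g₂(r)^α ∫_r^∞ g₂^(−α)` for every `r > 0` (equivalently,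
`χ_{g₁} ≥ χ_{g₂}` on `(0,∞)`). -/
theorem hardy_weight_comparison (α : ℝ) (hα : 0 < α) (g₁ g₂ : ℝ → ℝ)
    (hc₁ : ContinuousOn g₁ (Set.Ioi 0)) (hc₂ : ContinuousOn g₂ (Set.Ioi 0))
    (hpos₁ : ∀ s ∈ Set.Ioi (0 : ℝ), 0 < g₁ s) (hpos₂ : ∀ s ∈ Set.Ioi (0 : ℝ), 0 < g₂ s)
    (hint₁ : IntegrableOn (fun s => g₁ s ^ (-α)) (Set.Ioi 1))
    (hint₂ : IntegrableOn (fun s => g₂ s ^ (-α)) (Set.Ioi 1))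
    (hmono : MonotoneOn (fun s => g₁ s / g₂ s) (Set.Ioi 0)) :
    ∀ r > 0, g₁ r ^ α * ∫ s in Set.Ioi r, g₁ s ^ (-α) ≤
      g₂ r ^ α * ∫ s in Set.Ioi r, g₂ s ^ (-α) := by
  intro r hr
  have hi₁ := aux_integrableOn α g₁ hc₁ hpos₁ hint₁ r hr
  have hi₂ := aux_integrableOn α g₂ hc₂ hpos₂ hint₂ r hr
  rw [← MeasureTheory.integral_const_mul, ← MeasureTheory.integral_const_mul]
  apply MeasureTheory.setIntegral_mono_on (hi₁.const_mul _) (hi₂.const_mul _)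
    measurableSet_Ioi
  intro s hs
  have hs0 : s ∈ Set.Ioi (0 : ℝ) := lt_trans hr hs
  have h1r := hpos₁ r hr
  have h2r := hpos₂ r hr
  have h1s := hpos₁ s hs0
  have h2s := hpos₂ s hs0
  have hdiv : g₁ r / g₂ r ≤ g₁ s / g₂ s := hmono hr hs0 (le_of_lt hs)
  have hcross : g₁ r * g₂ s ≤ g₁ s * g₂ r := by
    rw [div_le_div_iff₀ h2r h2s] at hdiv; linarith
  have hrpow : (g₁ r * g₂ s) ^ α ≤ (g₁ s * g₂ r) ^ α :=
    Real.rpow_le_rpow (by positivity) hcross hα.le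
  rw [Real.mul_rpow h1r.le h2s.le, Real.mul_rpow h1s.le h2r.le] at hrpow
  rw [Real.rpow_neg h1s.le, Real.rpow_neg h2s.le]
  rw [← div_eq_mul_inv, ← div_eq_mul_inv, div_le_div_iff₀ (by positivity) (by positivity)]
  linarith
end

section
/- Let m ≥ 1 be an integer, let a : ℝ^m → ℝ be locally bounded, let b : ℝ^m → ℝ be continuous, and let F be a nonlinearity. Set B₀ = { x ∈ ℝ^m : b(x) ≤ 0 }. Let Ω ⊆ ℝ^m be an open set containing the closure of B₀, and suppose there exists a twice continuously differentiable function u : Ω → ℝ with 0 < u(x) for all x ∈ Ω, sup_Ω u < ∞, and Δu(x) + a(x)·u(x) − b(x)·F(u(x)) ≤ 0 for all x ∈ Ω, where Δ is the Euclidean Laplacian. Then for every ε > 0 there exists an open set U ⊆ ℝ^m containing the closure of B₀ such that ∫_{ℝ^m} ( ‖∇φ(x)‖² − a(x)·φ(x)² ) dx ≥ −ε·∫_{ℝ^m} φ(x)² dx for every continuously differentiable φ : ℝ^m → ℝ with compact support contained in U. -/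
open MeasureTheory

/-- A nonlinearity in the sense of (2.12) of the paper (with `p = 2`). -/
structure IsNonlinearity (F : ℝ → ℝ) : Prop where
  cont : ContinuousOn F (Set.Ici 0)
  zero : F 0 = 0
  pos : ∀ t : ℝ, 0 < t → 0 < F t
  strictMono : StrictMonoOn (fun t => F t / t) (Set.Ioi 0)
  tendsto_zero : Filter.Tendsto (fun t => F t / t) (nhdsWithin 0 (Set.Ioi 0)) (nhds 0)
  tendsto_top : Filter.Tendsto (fun t => F t / t) Filter.atTop Filter.atTop

/-- Integration by parts: the integral of a directional derivative of a compactly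
supported `C¹` function vanishes. -/
lemma integral_fderiv_apply_eq_zero {E : Type*} [NormedAddCommGroup E] [NormedSpace ℝ E]
    [MeasurableSpace E] [BorelSpace E] [FiniteDimensional ℝ E] (μ : Measure E)
    [μ.IsAddHaarMeasure] (h : E → ℝ) (h1 : ContDiff ℝ 1 h) (h2 : HasCompactSupport h)
    (v : E) : ∫ x, fderiv ℝ h x v ∂μ = 0 := by
  obtain ⟨C, hC⟩ := ContDiff.lipschitzWith_of_hasCompactSupport h2 h1 one_ne_zero
  have key := LipschitzWith.integral_lineDeriv_mul_eq (μ := μ)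
    (LipschitzWith.const (b := (1:ℝ))) hC h2 (-v)
  have h0 : ∀ x : E, lineDeriv ℝ (fun _ : E => (1:ℝ)) x (-v) = 0 := fun x =>
    ((hasFDerivAt_const (1:ℝ) x).hasLineDerivAt (-v)).lineDeriv.trans (by simp)
  have h3 : ∀ x : E, lineDeriv ℝ h x (- -v) = fderiv ℝ h x v := fun x => by
    rw [neg_neg, (h1.differentiable one_ne_zero x).lineDeriv_eq_fderiv]
  simp only [h0, zero_mul, integral_zero, h3, mul_one] at key
  exact key.symm

/-- The squared norm of the gradient is the sum of the squares of the partial derivatives. -/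
lemma norm_gradient_sq {m : ℕ} (φ : EuclideanSpace ℝ (Fin m) → ℝ) (x : EuclideanSpace ℝ (Fin m)) :
    ‖gradient φ x‖ ^ 2 = ∑ i, (fderiv ℝ φ x (EuclideanSpace.single i (1:ℝ))) ^ 2 := by
  have hcoord : ∀ i, gradient φ x i = fderiv ℝ φ x (EuclideanSpace.single i (1:ℝ)) := by
    intro i
    have h1 : (inner ℝ (gradient φ x) (EuclideanSpace.single i (1:ℝ)) : ℝ)
        = fderiv ℝ φ x (EuclideanSpace.single i (1:ℝ)) :=
      InnerProductSpace.toDual_symm_apply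
    rw [← h1, EuclideanSpace.inner_single_right]
    simp
  rw [EuclideanSpace.norm_eq]
  rw [Real.sq_sqrt (by positivity)]
  refine Finset.sum_congr rfl fun i _ => ?_
  rw [hcoord i, Real.norm_eq_abs, sq_abs]

/-- A locally bounded measurable function times the square of a compactly supported
continuous function is integrable. -/
lemma integrable_aux {m : ℕ} (a φ : EuclideanSpace ℝ (Fin m) → ℝ) (ha_meas : Measurable a)
    (ha_loc : ∀ x : EuclideanSpace ℝ (Fin m), ∃ U ∈ nhds x, ∃ C : ℝ, ∀ y ∈ U, |a y| ≤ C)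
    (hφcont : Continuous φ) (hφc : HasCompactSupport φ) :
    Integrable (fun x => a x * φ x ^ 2) := by
  set K := tsupport φ with hK
  have hKc : IsCompact K := hφc
  choose V hV C hC using ha_loc
  obtain ⟨t, _, hKt⟩ := hKc.elim_nhds_subcover V (fun x _ => hV x)
  obtain ⟨M, hM⟩ := Finset.exists_le (t.image C)
  have haK : ∀ x ∈ K, |a x| ≤ M := by
    intro x hx
    obtain ⟨y, hyt, hyV⟩ := Set.mem_iUnion₂.1 (hKt hx)
    exact (hC y x hyV).trans (hM _ (Finset.mem_image_of_mem C hyt))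
  obtain ⟨N, hN⟩ := hKc.exists_bound_of_continuousOn ((hφcont.pow 2).continuousOn)
  have hmble : AEStronglyMeasurable (fun x => a x * φ x ^ 2) volume :=
    (ha_meas.mul ((hφcont.pow 2).measurable)).aestronglyMeasurable
  have hg : Integrable (K.indicator fun _ => M * N) volume := by
    rw [integrable_indicator_iff hKc.isClosed.measurableSet]
    exact integrableOn_const hKc.measure_lt_top.ne
  refine hg.mono' hmble (Filter.Eventually.of_forall fun x => ?_)
  by_cases hx : x ∈ K
  · rw [Set.indicator_of_mem hx]
    have h1 := haK x hx
    have h2 := hN x hx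
    calc ‖a x * φ x ^ 2‖ = |a x| * ‖φ x ^ 2‖ := by rw [norm_mul]; rfl
    _ ≤ M * N := mul_le_mul h1 h2 (norm_nonneg _) ((abs_nonneg _).trans h1)
  · rw [Set.indicator_of_notMem hx, image_eq_zero_of_notMem_tsupport hx]
    simp

/-- Proposition 6.5 of the paper specialized to `M = ℝ^m`, `p = 2`, `f ≡ 0`: a positive
bounded supersolution of `Δu + a u − b F(u) ≤ 0` on a neighbourhood `Ω` of the closure
of `B₀ = {b ≤ 0}` forces the generalized fundamental tone `λ_a(B₀)` to be non-negative,
i.e. for every `ε > 0` there is an open set `U ⊇ closure B₀` on which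
`∫(‖∇φ‖² − a φ²) ≥ −ε ∫ φ²` for all test functions `φ` supported in `U`. -/
theorem fundamental_tone_nonneg (m : ℕ) (hm : 1 ≤ m)
    (a : EuclideanSpace ℝ (Fin m) → ℝ) (ha_meas : Measurable a)
    (ha_loc : ∀ x : EuclideanSpace ℝ (Fin m),
      ∃ U ∈ nhds x, ∃ C : ℝ, ∀ y ∈ U, |a y| ≤ C)
    (b : EuclideanSpace ℝ (Fin m) → ℝ) (hb : Continuous b)
    (F : ℝ → ℝ) (hF : IsNonlinearity F)
    (Ω : Set (EuclideanSpace ℝ (Fin m))) (hΩ : IsOpen Ω)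
    (hB₀ : closure {x | b x ≤ 0} ⊆ Ω)
    (u : EuclideanSpace ℝ (Fin m) → ℝ)
    (hu : ContDiffOn ℝ 2 u Ω) (hupos : ∀ x ∈ Ω, 0 < u x)
    (hubdd : BddAbove (u '' Ω))
    (hsuper : ∀ x ∈ Ω, laplacian u x + a x * u x - b x * F (u x) ≤ 0) :
    ∀ ε > (0 : ℝ), ∃ U : Set (EuclideanSpace ℝ (Fin m)), IsOpen U ∧
      closure {x | b x ≤ 0} ⊆ U ∧
      ∀ φ : EuclideanSpace ℝ (Fin m) → ℝ,
        ContDiff ℝ 1 φ → HasCompactSupport φ → tsupport φ ⊆ U →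
        -ε * ∫ x, (φ x) ^ 2 ≤ ∫ x, (‖gradient φ x‖ ^ 2 - a x * (φ x) ^ 2) := by
  intro ε hε
  rcases Set.eq_empty_or_nonempty Ω with hΩe | ⟨x₀, hx₀⟩
  · -- trivial case: `Ω = ∅`, hence `closure B₀ = ∅`
    refine ⟨∅, isOpen_empty, by rw [hΩe] at hB₀; exact hB₀, ?_⟩
    intro φ hφ1 hφc hφU
    have hφeq : φ = fun _ => 0 := funext fun x =>
      image_eq_zero_of_notMem_tsupport (fun hx => (hφU hx).elim)
    rw [hφeq]
    simp [gradient_const]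
  -- main case
  have hS0 : 0 < sSup (u '' Ω) :=
    lt_of_lt_of_le (hupos x₀ hx₀) (le_csSup hubdd ⟨x₀, hx₀, rfl⟩)
  set S := sSup (u '' Ω) with hSdef
  set C := F S / S with hCdef
  have hC0 : 0 < C := div_pos (hF.pos S hS0) hS0
  have hratio : ∀ x ∈ Ω, F (u x) / u x ≤ C := fun x hx =>
    hF.strictMono.monotoneOn (Set.mem_Ioi.2 (hupos x hx)) (Set.mem_Ioi.2 hS0)
      (le_csSup hubdd ⟨x, hx, rfl⟩)
  refine ⟨Ω ∩ b ⁻¹' Set.Iio (ε / C), hΩ.inter (isOpen_Iio.preimage hb), ?_, ?_⟩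
  · intro x hx
    refine ⟨hB₀ hx, ?_⟩
    have hbx : b x ≤ 0 := (isClosed_le hb continuous_const).closure_subset hx
    exact Set.mem_preimage.2 (Set.mem_Iio.2 (lt_of_le_of_lt hbx (div_pos hε hC0)))
  -- the key differential inequality on `U`
  have hkey : ∀ x ∈ Ω, b x < ε / C → laplacian u x / u x ≤ ε - a x := by
    intro x hxΩ hxb
    have hu0 : 0 < u x := hupos x hxΩ
    have hF0 : 0 < F (u x) := hF.pos _ hu0
    have hsup := hsuper x hxΩ
    have hbF : b x * F (u x) ≤ ε * u x := by
      by_cases hbx : b x ≤ 0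
      · exact (mul_nonpos_of_nonpos_of_nonneg hbx hF0.le).trans (mul_pos hε hu0).le
      · push_neg at hbx
        have h1 : F (u x) / u x ≤ C := hratio x hxΩ
        calc b x * F (u x) = b x * (F (u x) / u x) * u x := by field_simp
        _ ≤ (ε / C) * C * u x := by
            refine mul_le_mul_of_nonneg_right ?_ hu0.le
            exact mul_le_mul hxb.le h1 (div_nonneg hF0.le hu0.le)
              (le_of_lt (div_pos hε hC0))
        _ = ε * u x := by rw [div_mul_cancel₀ _ hC0.ne']
    have hexp : (ε - a x) * u x = ε * u x - a x * u x := by ring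
    rw [div_le_iff₀ hu0]
    linarith
  intro φ hφ1 hφc hφU
  set K := tsupport φ with hKdef
  have hKΩ : K ⊆ Ω := hφU.trans Set.inter_subset_left
  have hKco : IsCompact K := hφc
  have hφcont : Continuous φ := hφ1.continuous
  have hφd : ∀ x, DifferentiableAt ℝ φ x := fun x => hφ1.differentiable one_ne_zero x
  have hud : ∀ x ∈ Ω, DifferentiableAt ℝ u x := fun x hx =>
    (hu.contDiffAt (hΩ.mem_nhds hx)).differentiableAt two_ne_zero
  have hune : ∀ x ∈ Ω, u x ≠ 0 := fun x hx => (hupos x hx).ne'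
  have hcd : ContDiffOn ℝ 1 (fderiv ℝ u) Ω := hu.fderiv_of_isOpen hΩ (by norm_num)
  have hqcd : ∀ i : Fin m,
      ContDiffOn ℝ 1 (fun y => fderiv ℝ u y (EuclideanSpace.single i (1:ℝ))) Ω :=
    fun i => hcd.clm_apply contDiffOn_const
  -- the vector field `X i = φ² / u · ∂ᵢ u` (extended by zero)
  set Xd : Fin m → EuclideanSpace ℝ (Fin m) → ℝ := fun i =>
    Ω.indicator (fun y => φ y * φ y * (u y)⁻¹ * fderiv ℝ u y (EuclideanSpace.single i (1:ℝ)))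
    with hXdef
  have hXeqΩ : ∀ (i : Fin m), ∀ x ∈ Ω, Xd i =ᶠ[nhds x]
      fun y => φ y * φ y * (u y)⁻¹ * fderiv ℝ u y (EuclideanSpace.single i (1:ℝ)) :=
    fun i x hx => Filter.eventuallyEq_of_mem (hΩ.mem_nhds hx)
      (fun y hy => Set.indicator_of_mem hy _)
  have hXeq0 : ∀ (i : Fin m), ∀ x ∉ K, Xd i =ᶠ[nhds x] fun _ => (0:ℝ) := by
    intro i x hx
    refine Filter.eventuallyEq_of_mem (hKco.isClosed.isOpen_compl.mem_nhds hx) fun y hy => ?_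
    have hφy : φ y = 0 := image_eq_zero_of_notMem_tsupport hy
    simp only [hXdef]
    exact Set.indicator_apply_eq_zero.2 (fun _ => by simp [hφy])
  have hφeq0 : ∀ x ∉ K, φ =ᶠ[nhds x] fun _ => (0:ℝ) := fun x hx =>
    Filter.eventuallyEq_of_mem (hKco.isClosed.isOpen_compl.mem_nhds hx) fun y hy =>
      image_eq_zero_of_notMem_tsupport hy
  have hXcd : ∀ i, ContDiff ℝ 1 (Xd i) := by
    intro i
    rw [contDiff_iff_contDiffAt]
    intro x
    by_cases hx : x ∈ Ω
    · have hfor : ContDiffOn ℝ 1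
          (fun y => φ y * φ y * (u y)⁻¹ * fderiv ℝ u y (EuclideanSpace.single i (1:ℝ))) Ω :=
        (((hφ1.contDiffOn.mul hφ1.contDiffOn).mul
          ((hu.of_le one_le_two).inv hune)).mul (hqcd i))
      exact (hfor.contDiffAt (hΩ.mem_nhds hx)).congr_of_eventuallyEq (hXeqΩ i x hx)
    · exact contDiffAt_const.congr_of_eventuallyEq (hXeq0 i x (fun hK => hx (hKΩ hK)))
  have hXsupp : ∀ i, HasCompactSupport (Xd i) := by
    intro i
    refine hφc.mono' fun y hy => ?_
    by_contra hyK
    refine hy ?_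
    have hφy : φ y = 0 := image_eq_zero_of_notMem_tsupport hyK
    simp only [hXdef]
    exact Set.indicator_apply_eq_zero.2 (fun _ => by simp [hφy])
  have hXzero : ∀ (i : Fin m), ∀ x ∉ K, fderiv ℝ (Xd i) x = 0 := fun i x hx => by
    rw [(hXeq0 i x hx).fderiv_eq]; exact fderiv_const_apply 0
  have hpzero : ∀ x ∉ K, fderiv ℝ φ x = 0 := fun x hx => by
    rw [(hφeq0 x hx).fderiv_eq]; exact fderiv_const_apply 0
  -- the three relevant functions
  set P : EuclideanSpace ℝ (Fin m) → ℝ :=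
    fun x => ∑ i, (fderiv ℝ φ x (EuclideanSpace.single i (1:ℝ))) ^ 2 with hPdef
  set DX : EuclideanSpace ℝ (Fin m) → ℝ :=
    fun x => ∑ i, fderiv ℝ (Xd i) x (EuclideanSpace.single i (1:ℝ)) with hDXdef
  set G : EuclideanSpace ℝ (Fin m) → ℝ :=
    Ω.indicator (fun y => laplacian u y / u y * φ y ^ 2) with hGdef
  -- the pointwise Barta inequality
  have hpointwise : ∀ x, 0 ≤ P x + G x - DX x := by
    intro x
    by_cases hx : x ∈ Ω
    · have hne := (hupos x hx).ne'
      have key_i : ∀ i : Fin m,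
          (fderiv ℝ φ x (EuclideanSpace.single i (1:ℝ))) ^ 2
          + fderiv ℝ (fun y => fderiv ℝ u y (EuclideanSpace.single i (1:ℝ))) x
              (EuclideanSpace.single i (1:ℝ)) * (u x)⁻¹ * φ x ^ 2
          - fderiv ℝ (Xd i) x (EuclideanSpace.single i (1:ℝ))
          = (fderiv ℝ φ x (EuclideanSpace.single i (1:ℝ))
              - φ x * (u x)⁻¹ * fderiv ℝ u x (EuclideanSpace.single i (1:ℝ))) ^ 2 := by
        intro i
        have h1 : HasFDerivAt (fun y => φ y * φ y)
            (φ x • fderiv ℝ φ x + φ x • fderiv ℝ φ x) x :=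
          (hφd x).hasFDerivAt.mul (hφd x).hasFDerivAt
        have h2 : HasFDerivAt (fun y => (u y)⁻¹) ((-(u x ^ 2)⁻¹) • fderiv ℝ u x) x :=
          (hasDerivAt_inv hne).comp_hasFDerivAt x ((hud x hx).hasFDerivAt)
        have h3 : HasFDerivAt (fun y => fderiv ℝ u y (EuclideanSpace.single i (1:ℝ)))
            (fderiv ℝ (fun y => fderiv ℝ u y (EuclideanSpace.single i (1:ℝ))) x) x :=
          (((hqcd i).contDiffAt (hΩ.mem_nhds hx)).differentiableAt one_ne_zero).hasFDerivAt
        have h4 := (h1.mul h2).mul h3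
        have h5 := (h4.congr_of_eventuallyEq (hXeqΩ i x hx)).fderiv
        rw [h5]
        have hw : (u x ^ 2)⁻¹ = (u x)⁻¹ * (u x)⁻¹ := by rw [sq, mul_inv]
        simp only [ContinuousLinearMap.add_apply, ContinuousLinearMap.smul_apply,
          ContinuousLinearMap.coe_smul', Pi.smul_apply, smul_eq_mul, ContinuousLinearMap.neg_apply, Pi.mul_apply]
        rw [hw]; ring
      have hG : G x = ∑ i : Fin m,
          fderiv ℝ (fun y => fderiv ℝ u y (EuclideanSpace.single i (1:ℝ))) x
            (EuclideanSpace.single i (1:ℝ)) * (u x)⁻¹ * φ x ^ 2 := by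
        rw [hGdef, Set.indicator_of_mem hx]
        simp only [laplacian]
        rw [div_eq_mul_inv, Finset.sum_mul, Finset.sum_mul]
      rw [hG]
      simp only [hPdef, hDXdef]
      rw [← Finset.sum_add_distrib, ← Finset.sum_sub_distrib]
      exact Finset.sum_nonneg fun i _ => by rw [key_i i]; positivity
    · have hxK : x ∉ K := fun hK => hx (hKΩ hK)
      have hP : P x = 0 := by
        simp only [hPdef]
        exact Finset.sum_eq_zero fun i _ => by rw [hpzero x hxK]; simp
      have hD : DX x = 0 := by
        simp only [hDXdef]
        exact Finset.sum_eq_zero fun i _ => by rw [hXzero i x hxK]; simp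
      have hGx : G x = 0 := by rw [hGdef, Set.indicator_of_notMem hx]
      rw [hP, hD, hGx]; norm_num
  -- integrability
  have hfderiv_φ_cont : Continuous (fun x => fderiv ℝ φ x) := hφ1.continuous_fderiv one_ne_zero
  have hPcont : Continuous P :=
    continuous_finset_sum _ fun i _ => (hfderiv_φ_cont.clm_apply continuous_const).pow 2
  have hPsupp : HasCompactSupport P := by
    refine hφc.mono' fun y hy => ?_
    by_contra hyK
    refine hy ?_
    show (∑ i, (fderiv ℝ φ y (EuclideanSpace.single i (1:ℝ))) ^ 2) = 0
    exact Finset.sum_eq_zero fun i _ => by rw [hpzero y hyK]; simp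
  have hPint : Integrable P := hPcont.integrable_of_hasCompactSupport hPsupp
  have hDicont : ∀ i : Fin m,
      Continuous (fun x => fderiv ℝ (Xd i) x (EuclideanSpace.single i (1:ℝ))) := fun i =>
    (((hXcd i).continuous_fderiv one_ne_zero).clm_apply continuous_const)
  have hDisupp : ∀ i : Fin m,
      HasCompactSupport (fun x => fderiv ℝ (Xd i) x (EuclideanSpace.single i (1:ℝ))) := by
    intro i
    refine hφc.mono' fun y hy => ?_
    by_contra hyK
    refine hy ?_
    show fderiv ℝ (Xd i) y (EuclideanSpace.single i (1:ℝ)) = 0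
    rw [hXzero i y hyK]; simp
  have hDiint : ∀ i : Fin m,
      Integrable (fun x => fderiv ℝ (Xd i) x (EuclideanSpace.single i (1:ℝ))) := fun i =>
    (hDicont i).integrable_of_hasCompactSupport (hDisupp i)
  have hDint : Integrable DX := by
    rw [hDXdef]
    exact integrable_finset_sum _ fun i _ => hDiint i
  have hDzero : ∫ x, DX x = 0 := by
    simp only [hDXdef]
    rw [integral_finset_sum _ fun i _ => hDiint i]
    exact Finset.sum_eq_zero fun i _ =>
      integral_fderiv_apply_eq_zero volume (Xd i) (hXcd i) (hXsupp i) _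
  have hlap : ContinuousOn (fun x => laplacian u x) Ω := by
    have : ∀ i : Fin m, ContinuousOn (fun x =>
        fderiv ℝ (fun y => fderiv ℝ u y (EuclideanSpace.single i (1:ℝ))) x
          (EuclideanSpace.single i (1:ℝ))) Ω := fun i =>
      ((hqcd i).continuousOn_fderiv_of_isOpen hΩ le_rfl).clm_apply continuousOn_const
    exact continuousOn_finset_sum _ fun i _ => this i
  have hucont : ContinuousOn u Ω := hu.continuousOn
  have hGcont : Continuous G := by
    rw [continuous_iff_continuousAt]
    intro x
    by_cases hx : x ∈ Ω
    · have heq : G =ᶠ[nhds x] fun y => laplacian u y / u y * φ y ^ 2 :=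
        Filter.eventuallyEq_of_mem (hΩ.mem_nhds hx) fun y hy => Set.indicator_of_mem hy _
      have hca : ContinuousAt (fun y => laplacian u y / u y * φ y ^ 2) x :=
        (((hlap.div hucont hune).mul ((hφcont.pow 2).continuousOn)).continuousAt
          (hΩ.mem_nhds hx))
      exact hca.congr heq.symm
    · have hxK : x ∉ K := fun hK => hx (hKΩ hK)
      have heq : G =ᶠ[nhds x] fun _ => (0:ℝ) := by
        refine Filter.eventuallyEq_of_mem (hKco.isClosed.isOpen_compl.mem_nhds hxK)
          fun y hy => ?_
        have hφy : φ y = 0 := image_eq_zero_of_notMem_tsupport hy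
        by_cases hyΩ : y ∈ Ω
        · rw [hGdef, Set.indicator_of_mem hyΩ]; simp [hφy]
        · rw [hGdef, Set.indicator_of_notMem hyΩ]
      exact continuousAt_const.congr heq.symm
  have hGsupp : HasCompactSupport G := by
    refine hφc.mono' fun y hy => ?_
    by_contra hyK
    have hφy : φ y = 0 := image_eq_zero_of_notMem_tsupport hyK
    refine hy ?_
    by_cases hyΩ : y ∈ Ω
    · rw [hGdef, Set.indicator_of_mem hyΩ]; simp [hφy]
    · rw [hGdef, Set.indicator_of_notMem hyΩ]
  have hGint : Integrable G := hGcont.integrable_of_hasCompactSupport hGsupp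
  have haφint : Integrable (fun x => a x * φ x ^ 2) :=
    integrable_aux a φ ha_meas ha_loc hφcont hφc
  have hφ2int : Integrable (fun x => φ x ^ 2) := by
    refine (hφcont.pow 2).integrable_of_hasCompactSupport (hφc.mono' fun y hy => ?_)
    by_contra hyK
    refine hy ?_
    show φ y ^ 2 = 0
    rw [image_eq_zero_of_notMem_tsupport hyK]; ring
  have hεarw : (fun x => (ε - a x) * φ x ^ 2) = fun x => ε * φ x ^ 2 - a x * φ x ^ 2 :=
    funext fun x => by ring
  have hεaint : Integrable (fun x => (ε - a x) * φ x ^ 2) := by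
    rw [hεarw]; exact (hφ2int.const_mul ε).sub haφint
  -- the comparison `G ≤ (ε - a) φ²`
  have hG_le : ∀ x, G x ≤ (ε - a x) * φ x ^ 2 := by
    intro x
    by_cases hx : x ∈ K
    · have hxU := hφU hx
      have hxΩ : x ∈ Ω := hxU.1
      have hxb : b x < ε / C := hxU.2
      rw [hGdef, Set.indicator_of_mem hxΩ]
      exact mul_le_mul_of_nonneg_right (hkey x hxΩ hxb) (sq_nonneg _)
    · have hφx : φ x = 0 := image_eq_zero_of_notMem_tsupport hx
      by_cases hxΩ : x ∈ Ω
      · rw [hGdef, Set.indicator_of_mem hxΩ]; simp [hφx]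
      · rw [hGdef, Set.indicator_of_notMem hxΩ]; simp [hφx]
  -- assemble
  have h0 : 0 ≤ ∫ x, (P x + G x - DX x) := integral_nonneg hpointwise
  have hPG : Integrable (fun x => P x + G x) := hPint.add hGint
  rw [integral_sub hPG hDint, integral_add hPint hGint, hDzero, sub_zero] at h0
  have hGle2 : ∫ x, G x ≤ ∫ x, (ε - a x) * φ x ^ 2 :=
    integral_mono hGint hεaint hG_le
  have hεa_eq : ∫ x, (ε - a x) * φ x ^ 2
      = ε * (∫ x, φ x ^ 2) - ∫ x, a x * φ x ^ 2 := by
    rw [hεarw, integral_sub (hφ2int.const_mul ε) haφint, integral_const_mul]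
  have hrw : ∫ x, (‖gradient φ x‖ ^ 2 - a x * φ x ^ 2)
      = (∫ x, P x) - ∫ x, a x * φ x ^ 2 := by
    rw [show (fun x => ‖gradient φ x‖ ^ 2 - a x * φ x ^ 2)
        = fun x => P x - a x * φ x ^ 2 from funext fun x => by
      simp only [hPdef]; rw [norm_gradient_sq]]
    exact integral_sub hPint haφint
  rw [hrw]
  linarith
end
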